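/- arXiv:2009.01384 — 9 statements merged into one kernel-verified Lean document; each statement's English description precedes it below -/
import Mathlib

section
/- Let k be a field and α : k[T1,T2] → k a k-linear functional. Then α is recognizable (i.e., there exists an ideal of k[T1,T2] of finite codimension contained in ker α) if and only if there exist a polynomial P ∈ k[T1,T2] and one-variable polynomials Q1, Q2 ∈ k[T] with Q1(0) ≠ 0 and Q2(0) ≠ 0 such that Z_α(T1,T2) · Q1(T1) · Q2(T2) = P(T1,T2) holds in the formal power series ring k[[T1,T2]] (equivalently, Z_α = P/(Q1(T1)·Q2(T2))). -/
open MvPolynomial Finset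

section RatAux

variable {k : Type*} [Field k]

/-- auxiliary: the exponent finsupp `(i, j)` on `Fin 2`. -/
noncomputable def fd (i j : ℕ) : Fin 2 →₀ ℕ := Finsupp.single 0 i + Finsupp.single 1 j

lemma fd_apply_zero (i j : ℕ) : fd i j 0 = i := by
  simp [fd, Finsupp.single_apply]

lemma fd_apply_one (i j : ℕ) : fd i j 1 = j := by
  simp [fd, Finsupp.single_apply]

lemma eq_fd (d : Fin 2 →₀ ℕ) : d = fd (d 0) (d 1) := by
  ext s
  fin_cases s
  · simp [fd_apply_zero]
  · simp [fd_apply_one]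

lemma sub_fd' (d : Fin 2 →₀ ℕ) (i j : ℕ) :
    d - Finsupp.single 1 j - Finsupp.single 0 i = fd (d 0 - i) (d 1 - j) := by
  ext s
  fin_cases s
  · simp [Finsupp.tsub_apply, Finsupp.single_apply, fd]
  · simp [Finsupp.tsub_apply, Finsupp.single_apply, fd]

/-- truncated reversal sum `∑_{i ≤ c} Q_i · (X v)^(c-i)`. -/
noncomputable def Sv (v : Fin 2) (Q : Polynomial k) (c : ℕ) : MvPolynomial (Fin 2) k :=
  ∑ i ∈ Finset.range (c+1), monomial (Finsupp.single v (c - i)) (Q.coeff i)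

lemma S_mul (Q1 Q2 : Polynomial k) (c e : ℕ) :
    Sv 0 Q1 c * Sv 1 Q2 e =
      ∑ i ∈ range (c+1), ∑ j ∈ range (e+1),
        monomial (fd (c - i) (e - j)) (Q1.coeff i * Q2.coeff j) := by
  rw [Sv, Sv, Finset.sum_mul_sum]
  refine Finset.sum_congr rfl fun i _ => Finset.sum_congr rfl fun j _ => ?_
  rw [monomial_mul]
  rfl

lemma S_factor (v : Fin 2) (Q p : Polynomial k) (n c : ℕ) (hn : n ≤ c)
    (hp : p.natDegree ≤ n) (hQ : Q.natDegree ≤ n)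
    (hco : ∀ i ≤ n, Q.coeff i = p.coeff (n - i)) :
    Sv v Q c = X v ^ (c - n) * Polynomial.aeval (X v : MvPolynomial (Fin 2) k) p := by
  have h1 : Sv v Q c = ∑ i ∈ range (n+1), monomial (Finsupp.single v (c - i)) (Q.coeff i) := by
    rw [Sv]
    refine (Finset.sum_subset (Finset.range_subset_range.2 (by omega)) fun i _ hi => ?_).symm
    have : Q.coeff i = 0 :=
      Polynomial.coeff_eq_zero_of_natDegree_lt (by simp [Finset.mem_range] at hi; omega)
    simp [this]
  have key : (∑ i ∈ range (n+1), monomial (Finsupp.single v (c - i)) (Q.coeff i))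
      = ∑ i ∈ range (n+1), monomial (Finsupp.single v (c - n + i)) (p.coeff i) := by
    rw [← Finset.sum_range_reflect (fun i => monomial (Finsupp.single v (c - n + i)) (p.coeff i))
      (n+1)]
    refine Finset.sum_congr rfl fun j hj => ?_
    have hjn : j ≤ n := by simp [Finset.mem_range] at hj; omega
    have h3 : c - n + (n + 1 - 1 - j) = c - j := by omega
    rw [h3, hco j hjn, show n + 1 - 1 - j = n - j by omega]
  rw [h1, key]
  rw [Polynomial.aeval_eq_sum_range' (lt_of_le_of_lt hp (Nat.lt_succ_self n)), Finset.mul_sum]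
  refine Finset.sum_congr rfl fun i _ => ?_
  rw [X_pow_eq_monomial, X_pow_eq_monomial, smul_monomial, smul_eq_mul, mul_one,
    monomial_mul, one_mul, ← Finsupp.single_add]

lemma coeff_ZAB (Z : MvPowerSeries (Fin 2) k) (Q1 Q2 : Polynomial k) (d : Fin 2 →₀ ℕ) :
    MvPowerSeries.coeff d
        (Z * ((Polynomial.aeval (X 0 : MvPolynomial (Fin 2) k) Q1 : MvPolynomial (Fin 2) k) :
              MvPowerSeries (Fin 2) k)
          * ((Polynomial.aeval (X 1 : MvPolynomial (Fin 2) k) Q2 : MvPolynomial (Fin 2) k) :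
              MvPowerSeries (Fin 2) k)) =
      ∑ i ∈ range (Q1.natDegree + 1), ∑ j ∈ range (Q2.natDegree + 1),
        if i ≤ d 0 ∧ j ≤ d 1 then
          Q1.coeff i * Q2.coeff j * MvPowerSeries.coeff (fd (d 0 - i) (d 1 - j)) Z
        else 0 := by
  have hA : ((Polynomial.aeval (X 0 : MvPolynomial (Fin 2) k) Q1 : MvPolynomial (Fin 2) k) :
      MvPowerSeries (Fin 2) k) =
      ∑ i ∈ range (Q1.natDegree + 1),
        MvPowerSeries.monomial (Finsupp.single 0 i) (Q1.coeff i) := by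
    rw [show (Polynomial.aeval (X 0 : MvPolynomial (Fin 2) k) Q1 : MvPolynomial (Fin 2) k)
        = ∑ i ∈ range (Q1.natDegree + 1), monomial (Finsupp.single 0 i) (Q1.coeff i) from ?_]
    · rw [← coeToMvPowerSeries.ringHom_apply, map_sum]
      exact Finset.sum_congr rfl fun i _ => by
        rw [coeToMvPowerSeries.ringHom_apply, coe_monomial]
    · rw [Polynomial.aeval_eq_sum_range]
      exact Finset.sum_congr rfl fun i _ => by
        rw [X_pow_eq_monomial, smul_monomial, smul_eq_mul, mul_one]
  have hB : ((Polynomial.aeval (X 1 : MvPolynomial (Fin 2) k) Q2 : MvPolynomial (Fin 2) k) :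
      MvPowerSeries (Fin 2) k) =
      ∑ j ∈ range (Q2.natDegree + 1),
        MvPowerSeries.monomial (Finsupp.single 1 j) (Q2.coeff j) := by
    rw [show (Polynomial.aeval (X 1 : MvPolynomial (Fin 2) k) Q2 : MvPolynomial (Fin 2) k)
        = ∑ j ∈ range (Q2.natDegree + 1), monomial (Finsupp.single 1 j) (Q2.coeff j) from ?_]
    · rw [← coeToMvPowerSeries.ringHom_apply, map_sum]
      exact Finset.sum_congr rfl fun i _ => by
        rw [coeToMvPowerSeries.ringHom_apply, coe_monomial]
    · rw [Polynomial.aeval_eq_sum_range]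
      exact Finset.sum_congr rfl fun i _ => by
        rw [X_pow_eq_monomial, smul_monomial, smul_eq_mul, mul_one]
  rw [hA, hB, Finset.mul_sum, Finset.mul_sum]
  simp only [Finset.sum_mul]
  rw [Finset.sum_comm, map_sum]
  refine Finset.sum_congr rfl fun i _ => ?_
  rw [map_sum]
  refine Finset.sum_congr rfl fun j _ => ?_
  rw [MvPowerSeries.coeff_mul_monomial, MvPowerSeries.coeff_mul_monomial]
  have h0 : ((d - Finsupp.single 1 j : Fin 2 →₀ ℕ)) 0 = d 0 := by
    simp [Finsupp.tsub_apply, Finsupp.single_apply]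
  simp only [Finsupp.single_le_iff, h0, sub_fd']
  split_ifs with h1 h2 h3 h4 h5
  · ring
  · exact absurd ⟨h2, h1⟩ h3
  · exact absurd h4.1 h2
  · simp
  · exact absurd h5.2 h1
  · rfl

variable (α : MvPolynomial (Fin 2) k →ₗ[k] k)

lemma alpha_S_mul (Q1 Q2 : Polynomial k) (c e : ℕ) :
    α (Sv 0 Q1 c * Sv 1 Q2 e) =
      ∑ i ∈ range (c+1), ∑ j ∈ range (e+1),
        Q1.coeff i * Q2.coeff j * α (monomial (fd (c-i) (e-j)) 1) := by
  rw [S_mul, map_sum]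
  refine Finset.sum_congr rfl fun i _ => ?_
  rw [map_sum]
  refine Finset.sum_congr rfl fun j _ => ?_
  have h : (monomial (fd (c-i) (e-j)) (Q1.coeff i * Q2.coeff j) : MvPolynomial (Fin 2) k)
      = (Q1.coeff i * Q2.coeff j) • monomial (fd (c-i) (e-j)) (1:k) := by
    rw [smul_monomial, smul_eq_mul, mul_one]
  rw [h, map_smul, smul_eq_mul]

lemma coeff_eq_alpha (Z : MvPowerSeries (Fin 2) k)
    (hZ : ∀ d : Fin 2 →₀ ℕ, MvPowerSeries.coeff d Z = α (monomial d 1))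
    (Q1 Q2 : Polynomial k) (d : Fin 2 →₀ ℕ) :
    MvPowerSeries.coeff d
        (Z * ((Polynomial.aeval (X 0 : MvPolynomial (Fin 2) k) Q1 : MvPolynomial (Fin 2) k) :
              MvPowerSeries (Fin 2) k)
          * ((Polynomial.aeval (X 1 : MvPolynomial (Fin 2) k) Q2 : MvPolynomial (Fin 2) k) :
              MvPowerSeries (Fin 2) k)) =
      α (Sv 0 Q1 (d 0) * Sv 1 Q2 (d 1)) := by
  classical
  set g : ℕ → ℕ → k := fun i j =>
    if i ≤ d 0 ∧ j ≤ d 1 then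
      Q1.coeff i * Q2.coeff j * α (monomial (fd (d 0 - i) (d 1 - j)) 1)
    else 0 with hg
  set M : ℕ := Q1.natDegree + d 0 with hM
  set M' : ℕ := Q2.natDegree + d 1 with hM'
  have hL : MvPowerSeries.coeff d
        (Z * ((Polynomial.aeval (X 0 : MvPolynomial (Fin 2) k) Q1 : MvPolynomial (Fin 2) k) :
              MvPowerSeries (Fin 2) k)
          * ((Polynomial.aeval (X 1 : MvPolynomial (Fin 2) k) Q2 : MvPolynomial (Fin 2) k) :
              MvPowerSeries (Fin 2) k)) =
      ∑ p ∈ range (Q1.natDegree + 1) ×ˢ range (Q2.natDegree + 1), g p.1 p.2 := by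
    rw [coeff_ZAB, Finset.sum_product]
    simp only [hZ, hg]
  have hR : α (Sv 0 Q1 (d 0) * Sv 1 Q2 (d 1)) =
      ∑ p ∈ range (d 0 + 1) ×ˢ range (d 1 + 1), g p.1 p.2 := by
    rw [alpha_S_mul, Finset.sum_product]
    refine Finset.sum_congr rfl fun i hi => Finset.sum_congr rfl fun j hj => ?_
    simp only [Finset.mem_range] at hi hj
    simp only [hg]
    rw [if_pos ⟨by omega, by omega⟩]
  have h1 : ∑ p ∈ range (Q1.natDegree + 1) ×ˢ range (Q2.natDegree + 1), g p.1 p.2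
      = ∑ p ∈ range (M + 1) ×ˢ range (M' + 1), g p.1 p.2 := by
    refine Finset.sum_subset (Finset.product_subset_product (Finset.range_subset_range.2 (by omega))
      (Finset.range_subset_range.2 (by omega))) ?_
    intro p _ hp
    simp only [Finset.mem_product, Finset.mem_range, not_and_or, not_lt] at hp
    have h : Q1.natDegree < p.1 ∨ Q2.natDegree < p.2 := by omega
    simp only [hg]
    rcases h with h | h
    · simp [Polynomial.coeff_eq_zero_of_natDegree_lt h]
    · simp [Polynomial.coeff_eq_zero_of_natDegree_lt h]
  have h2 : ∑ p ∈ range (d 0 + 1) ×ˢ range (d 1 + 1), g p.1 p.2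
      = ∑ p ∈ range (M + 1) ×ˢ range (M' + 1), g p.1 p.2 := by
    refine Finset.sum_subset (Finset.product_subset_product (Finset.range_subset_range.2 (by omega))
      (Finset.range_subset_range.2 (by omega))) ?_
    intro p _ hp
    simp only [Finset.mem_product, Finset.mem_range, not_and_or, not_lt] at hp
    have h : ¬(p.1 ≤ d 0 ∧ p.2 ≤ d 1) := by omega
    simp only [hg]
    exact if_neg h
  rw [hL, hR, h1, h2]

end RatAux

/-- `α` is *recognizable* if some ideal of finite codimension is contained in its kernel. -/
def Recognizable (k : Type*) [Field k] (α : MvPolynomial (Fin 2) k →ₗ[k] k) : Prop :=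
  ∃ I : Ideal (MvPolynomial (Fin 2) k),
    (∀ x ∈ I, α x = 0) ∧ FiniteDimensional k (MvPolynomial (Fin 2) k ⧸ I)

/-- A linear functional `α : k[T₁,T₂] → k` is recognizable iff its generating power series
`Z_α` is of the form `P(T₁,T₂) / (Q₁(T₁) Q₂(T₂))` with `Q₁(0) ≠ 0`, `Q₂(0) ≠ 0`. -/
theorem recognizable_iff_rational (k : Type*) [Field k]
    (α : MvPolynomial (Fin 2) k →ₗ[k] k)
    (Z : MvPowerSeries (Fin 2) k)
    (hZ : ∀ d : Fin 2 →₀ ℕ, MvPowerSeries.coeff d Z = α (monomial d 1)) :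
    Recognizable k α ↔
      ∃ (P : MvPolynomial (Fin 2) k) (Q1 Q2 : Polynomial k),
        Q1.eval 0 ≠ 0 ∧ Q2.eval 0 ≠ 0 ∧
        Z * ((Polynomial.aeval (X 0 : MvPolynomial (Fin 2) k) Q1 : MvPolynomial (Fin 2) k) :
              MvPowerSeries (Fin 2) k)
          * ((Polynomial.aeval (X 1 : MvPolynomial (Fin 2) k) Q2 : MvPolynomial (Fin 2) k) :
              MvPowerSeries (Fin 2) k)
          = (P : MvPowerSeries (Fin 2) k) := by
  constructor
  · rintro ⟨I, hI0, hIfin⟩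
    classical
    haveI := hIfin
    obtain ⟨p1, hp1m, hp1⟩ := IsIntegral.of_finite k (Ideal.Quotient.mkₐ k I (X 0))
    obtain ⟨p2, hp2m, hp2⟩ := IsIntegral.of_finite k (Ideal.Quotient.mkₐ k I (X 1))
    have hg1 : Polynomial.aeval (X 0 : MvPolynomial (Fin 2) k) p1 ∈ I := by
      have h1 : Ideal.Quotient.mkₐ k I (Polynomial.aeval (X 0 : MvPolynomial (Fin 2) k) p1)
          = 0 := by
        rw [← Polynomial.aeval_algHom_apply]; exact hp1
      rw [Ideal.Quotient.mkₐ_eq_mk] at h1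
      exact (Ideal.Quotient.eq_zero_iff_mem).mp h1
    have hg2 : Polynomial.aeval (X 1 : MvPolynomial (Fin 2) k) p2 ∈ I := by
      have h1 : Ideal.Quotient.mkₐ k I (Polynomial.aeval (X 1 : MvPolynomial (Fin 2) k) p2)
          = 0 := by
        rw [← Polynomial.aeval_algHom_apply]; exact hp2
      rw [Ideal.Quotient.mkₐ_eq_mk] at h1
      exact (Ideal.Quotient.eq_zero_iff_mem).mp h1
    set n1 := p1.natDegree with hn1
    set n2 := p2.natDegree with hn2
    have hco1 : ∀ i ≤ n1, p1.reverse.coeff i = p1.coeff (n1 - i) := fun i hi => by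
      rw [Polynomial.coeff_reverse, Polynomial.revAt_le hi]
    have hco2 : ∀ i ≤ n2, p2.reverse.coeff i = p2.coeff (n2 - i) := fun i hi => by
      rw [Polynomial.coeff_reverse, Polynomial.revAt_le hi]
    have hvanish : ∀ d : Fin 2 →₀ ℕ, n1 ≤ d 0 ∨ n2 ≤ d 1 →
        MvPowerSeries.coeff d
          (Z * ((Polynomial.aeval (X 0 : MvPolynomial (Fin 2) k) p1.reverse :
                MvPolynomial (Fin 2) k) : MvPowerSeries (Fin 2) k)
            * ((Polynomial.aeval (X 1 : MvPolynomial (Fin 2) k) p2.reverse :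
                MvPolynomial (Fin 2) k) : MvPowerSeries (Fin 2) k)) = 0 := by
      intro d hd
      rw [coeff_eq_alpha α Z hZ]
      rcases hd with hd | hd
      · rw [S_factor 0 p1.reverse p1 n1 (d 0) hd le_rfl p1.reverse_natDegree_le hco1]
        exact hI0 _ (Ideal.mul_mem_right _ _ (Ideal.mul_mem_left _ _ hg1))
      · rw [S_factor 1 p2.reverse p2 n2 (d 1) hd le_rfl p2.reverse_natDegree_le hco2]
        exact hI0 _ (Ideal.mul_mem_left _ _ (Ideal.mul_mem_left _ _ hg2))
    set W : MvPowerSeries (Fin 2) k :=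
      Z * ((Polynomial.aeval (X 0 : MvPolynomial (Fin 2) k) p1.reverse :
            MvPolynomial (Fin 2) k) : MvPowerSeries (Fin 2) k)
        * ((Polynomial.aeval (X 1 : MvPolynomial (Fin 2) k) p2.reverse :
            MvPolynomial (Fin 2) k) : MvPowerSeries (Fin 2) k) with hW
    set Bx : Finset (Fin 2 →₀ ℕ) :=
      (range n1 ×ˢ range n2).image (fun p => fd p.1 p.2) with hBx
    refine ⟨∑ e ∈ Bx, monomial e (MvPowerSeries.coeff e W), p1.reverse, p2.reverse, ?_, ?_, ?_⟩
    · rw [← Polynomial.coeff_zero_eq_eval_zero, Polynomial.coeff_zero_reverse]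
      simp [hp1m.leadingCoeff]
    · rw [← Polynomial.coeff_zero_eq_eval_zero, Polynomial.coeff_zero_reverse]
      simp [hp2m.leadingCoeff]
    · refine MvPowerSeries.ext fun d => ?_
      rw [MvPolynomial.coeff_coe]
      have hPcoeff : MvPolynomial.coeff d (∑ e ∈ Bx, monomial e (MvPowerSeries.coeff e W))
          = if d ∈ Bx then MvPowerSeries.coeff d W else 0 := by
        rw [MvPolynomial.coeff_sum]
        simp only [MvPolynomial.coeff_monomial]
        exact Finset.sum_ite_eq' Bx d (fun e => MvPowerSeries.coeff e W)
      rw [hPcoeff]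
      by_cases hmem : d ∈ Bx
      · rw [if_pos hmem]
      · rw [if_neg hmem]
        refine hvanish d ?_
        by_contra hcon
        push_neg at hcon
        exact hmem (Finset.mem_image.mpr ⟨(d 0, d 1),
          Finset.mem_product.mpr ⟨Finset.mem_range.mpr (by omega), Finset.mem_range.mpr (by omega)⟩,
          (eq_fd d).symm⟩)
  · rintro ⟨P, Q1, Q2, h01, h02, heq⟩
    classical
    set n1 := Q1.natDegree with hn1
    set n2 := Q2.natDegree with hn2
    set m := P.totalDegree + 1 with hm
    have hc01 : Q1.coeff 0 ≠ 0 := by rwa [Polynomial.coeff_zero_eq_eval_zero]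
    have hc02 : Q2.coeff 0 ≠ 0 := by rwa [Polynomial.coeff_zero_eq_eval_zero]
    have halpha : ∀ c e : ℕ, α (Sv 0 Q1 c * Sv 1 Q2 e) = P.coeff (fd c e) := by
      intro c e
      have h := coeff_eq_alpha α Z hZ Q1 Q2 (fd c e)
      rw [heq, MvPolynomial.coeff_coe, fd_apply_zero, fd_apply_one] at h
      exact h.symm
    have hPv : ∀ c e : ℕ, P.totalDegree < c ∨ P.totalDegree < e → P.coeff (fd c e) = 0 := by
      intro c e hce
      by_contra hne
      have hmem : fd c e ∈ P.support := by rwa [MvPolynomial.mem_support_iff]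
      have hle := MvPolynomial.le_totalDegree hmem
      have hsum : ((fd c e).sum fun _ x => x) = c + e := by
        rw [Finsupp.sum_fintype _ _ (fun _ => rfl), Fin.sum_univ_two, fd_apply_zero, fd_apply_one]
      rw [hsum] at hle
      omega
    -- Step A: rows far to the right are killed
    have stepA : ∀ c, n1 + m ≤ c → ∀ e, α (Sv 0 Q1 c * X 1 ^ e) = 0 := by
      intro c hc e
      induction e using Nat.strong_induction_on with
      | _ e ih =>
        have h0 : α (Sv 0 Q1 c * Sv 1 Q2 e) = 0 := by
          rw [halpha c e]; exact hPv c e (Or.inl (by omega))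
        have hS : Sv 1 Q2 e =
            (∑ j ∈ range e, monomial (Finsupp.single 1 (e - (j+1))) (Q2.coeff (j+1)))
              + Q2.coeff 0 • (X 1 ^ e : MvPolynomial (Fin 2) k) := by
          rw [Sv, Finset.sum_range_succ']
          congr 1
          rw [X_pow_eq_monomial, smul_monomial, smul_eq_mul, mul_one, Nat.sub_zero]
        have hexp : α (Sv 0 Q1 c * Sv 1 Q2 e)
            = (∑ j ∈ range e, Q2.coeff (j+1) * α (Sv 0 Q1 c * X 1 ^ (e - (j+1))))
              + Q2.coeff 0 * α (Sv 0 Q1 c * X 1 ^ e) := by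
          rw [hS, mul_add, map_add, mul_smul_comm, map_smul, smul_eq_mul, Finset.mul_sum, map_sum]
          congr 1
          refine Finset.sum_congr rfl fun j hj => ?_
          have hms : monomial (Finsupp.single 1 (e - (j+1))) (Q2.coeff (j+1))
              = Q2.coeff (j+1) • (X 1 ^ (e - (j+1)) : MvPolynomial (Fin 2) k) := by
            rw [X_pow_eq_monomial, smul_monomial, smul_eq_mul, mul_one]
          rw [hms, mul_smul_comm, map_smul, smul_eq_mul]
        rw [h0] at hexp
        have hz : ∀ j ∈ range e, Q2.coeff (j+1) * α (Sv 0 Q1 c * X 1 ^ (e - (j+1))) = 0 := by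
          intro j hj
          rw [ih (e - (j+1)) (by simp only [Finset.mem_range] at hj; omega), mul_zero]
        rw [Finset.sum_eq_zero hz, zero_add] at hexp
        exact (mul_eq_zero.mp hexp.symm).resolve_left hc02
    -- Step A': columns far up are killed
    have stepA' : ∀ e, n2 + m ≤ e → ∀ c, α (X 0 ^ c * Sv 1 Q2 e) = 0 := by
      intro e he c
      induction c using Nat.strong_induction_on with
      | _ c ih =>
        have h0 : α (Sv 0 Q1 c * Sv 1 Q2 e) = 0 := by
          rw [halpha c e]; exact hPv c e (Or.inr (by omega))
        have hS : Sv 0 Q1 c =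
            (∑ j ∈ range c, monomial (Finsupp.single 0 (c - (j+1))) (Q1.coeff (j+1)))
              + Q1.coeff 0 • (X 0 ^ c : MvPolynomial (Fin 2) k) := by
          rw [Sv, Finset.sum_range_succ']
          congr 1
          rw [X_pow_eq_monomial, smul_monomial, smul_eq_mul, mul_one, Nat.sub_zero]
        have hexp : α (Sv 0 Q1 c * Sv 1 Q2 e)
            = (∑ j ∈ range c, Q1.coeff (j+1) * α (X 0 ^ (c - (j+1)) * Sv 1 Q2 e))
              + Q1.coeff 0 * α (X 0 ^ c * Sv 1 Q2 e) := by
          rw [hS, add_mul, map_add, smul_mul_assoc, map_smul, smul_eq_mul, Finset.sum_mul, map_sum]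
          congr 1
          refine Finset.sum_congr rfl fun j hj => ?_
          have hms : monomial (Finsupp.single 0 (c - (j+1))) (Q1.coeff (j+1))
              = Q1.coeff (j+1) • (X 0 ^ (c - (j+1)) : MvPolynomial (Fin 2) k) := by
            rw [X_pow_eq_monomial, smul_monomial, smul_eq_mul, mul_one]
          rw [hms, smul_mul_assoc, map_smul, smul_eq_mul]
        rw [h0] at hexp
        have hz : ∀ j ∈ range c, Q1.coeff (j+1) * α (X 0 ^ (c - (j+1)) * Sv 1 Q2 e) = 0 := by
          intro j hj
          rw [ih (c - (j+1)) (by simp only [Finset.mem_range] at hj; omega), mul_zero]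
        rw [Finset.sum_eq_zero hz, zero_add] at hexp
        exact (mul_eq_zero.mp hexp.symm).resolve_left hc01
    -- The two annihilating generators
    set R1 : Polynomial k := Q1.reverse * Polynomial.X ^ m with hR1def
    set R2 : Polynomial k := Q2.reverse * Polynomial.X ^ m with hR2def
    set G1 : MvPolynomial (Fin 2) k :=
      Polynomial.aeval (X 0 : MvPolynomial (Fin 2) k) R1 with hG1def
    set G2 : MvPolynomial (Fin 2) k :=
      Polynomial.aeval (X 1 : MvPolynomial (Fin 2) k) R2 with hG2def
    have hG1eq : G1 = Polynomial.aeval (X 0 : MvPolynomial (Fin 2) k) Q1.reverse * X 0 ^ m := by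
      rw [hG1def, hR1def, map_mul, map_pow, Polynomial.aeval_X]
    have hG2eq : G2 = Polynomial.aeval (X 1 : MvPolynomial (Fin 2) k) Q2.reverse * X 1 ^ m := by
      rw [hG2def, hR2def, map_mul, map_pow, Polynomial.aeval_X]
    have hco1 : ∀ i ≤ n1, Q1.coeff i = Q1.reverse.coeff (n1 - i) := by
      intro i hi
      rw [Polynomial.coeff_reverse, Polynomial.revAt_le (by omega : n1 - i ≤ n1),
        show n1 - (n1 - i) = i by omega]
    have hco2 : ∀ i ≤ n2, Q2.coeff i = Q2.reverse.coeff (n2 - i) := by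
      intro i hi
      rw [Polynomial.coeff_reverse, Polynomial.revAt_le (by omega : n2 - i ≤ n2),
        show n2 - (n2 - i) = i by omega]
    have hSfac1 : ∀ a : ℕ, Sv 0 Q1 (a + m + n1)
        = X 0 ^ (a + m) * Polynomial.aeval (X 0 : MvPolynomial (Fin 2) k) Q1.reverse := by
      intro a
      rw [S_factor 0 Q1 Q1.reverse n1 (a+m+n1) (by omega) Q1.reverse_natDegree_le le_rfl
        (fun i hi => hco1 i hi), show a + m + n1 - n1 = a + m by omega]
    have hSfac2 : ∀ b : ℕ, Sv 1 Q2 (b + m + n2)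
        = X 1 ^ (b + m) * Polynomial.aeval (X 1 : MvPolynomial (Fin 2) k) Q2.reverse := by
      intro b
      rw [S_factor 1 Q2 Q2.reverse n2 (b+m+n2) (by omega) Q2.reverse_natDegree_le le_rfl
        (fun i hi => hco2 i hi), show b + m + n2 - n2 = b + m by omega]
    have hxx : ∀ a b : ℕ, monomial (fd a b) (1:k) = X 0 ^ a * X 1 ^ b := by
      intro a b
      rw [X_pow_eq_monomial, X_pow_eq_monomial, monomial_mul, one_mul, fd]
    have hmono1 : ∀ a b : ℕ, α (monomial (fd a b) (1:k) * G1) = 0 := by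
      intro a b
      have hre : monomial (fd a b) (1:k) * G1 = Sv 0 Q1 (a + m + n1) * X 1 ^ b := by
        rw [hSfac1 a, hG1eq, hxx, pow_add]
        ring
      rw [hre]
      exact stepA (a+m+n1) (by omega) b
    have hmono2 : ∀ a b : ℕ, α (monomial (fd a b) (1:k) * G2) = 0 := by
      intro a b
      have hre : monomial (fd a b) (1:k) * G2 = X 0 ^ a * Sv 1 Q2 (b + m + n2) := by
        rw [hSfac2 b, hG2eq, hxx, pow_add]
        ring
      rw [hre]
      exact stepA' (b+m+n2) (by omega) a
    have hzero1 : ∀ f : MvPolynomial (Fin 2) k, α (f * G1) = 0 := by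
      intro f
      rw [MvPolynomial.as_sum f, Finset.sum_mul, map_sum]
      refine Finset.sum_eq_zero fun e _ => ?_
      have hsm : monomial e (MvPolynomial.coeff e f)
          = MvPolynomial.coeff e f • monomial e (1:k) := by
        rw [smul_monomial, smul_eq_mul, mul_one]
      rw [hsm, smul_mul_assoc, map_smul, smul_eq_mul, eq_fd e, hmono1, mul_zero]
    have hzero2 : ∀ f : MvPolynomial (Fin 2) k, α (f * G2) = 0 := by
      intro f
      rw [MvPolynomial.as_sum f, Finset.sum_mul, map_sum]
      refine Finset.sum_eq_zero fun e _ => ?_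
      have hsm : monomial e (MvPolynomial.coeff e f)
          = MvPolynomial.coeff e f • monomial e (1:k) := by
        rw [smul_monomial, smul_eq_mul, mul_one]
      rw [hsm, smul_mul_assoc, map_smul, smul_eq_mul, eq_fd e, hmono2, mul_zero]
    refine ⟨Ideal.span {G1, G2}, ?_, ?_⟩
    · intro x hx
      rw [Ideal.mem_span_pair] at hx
      obtain ⟨u, v, huv⟩ := hx
      rw [← huv, map_add, hzero1 u, hzero2 v, add_zero]
    · -- finite dimensionality of the quotient
      have hQ1ne : Q1 ≠ 0 := fun h => h01 (by simp [h])
      have hQ2ne : Q2 ≠ 0 := fun h => h02 (by simp [h])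
      have hR1ne : R1 ≠ 0 := mul_ne_zero (Polynomial.reverse_eq_zero.not.mpr hQ1ne)
        (pow_ne_zero _ Polynomial.X_ne_zero)
      have hR2ne : R2 ≠ 0 := mul_ne_zero (Polynomial.reverse_eq_zero.not.mpr hQ2ne)
        (pow_ne_zero _ Polynomial.X_ne_zero)
      set I' : Ideal (MvPolynomial (Fin 2) k) := Ideal.span {G1, G2} with hI'
      have hmk1 : Polynomial.aeval (Ideal.Quotient.mkₐ k I' (X 0)) R1 = 0 := by
        rw [Polynomial.aeval_algHom_apply, ← hG1def, Ideal.Quotient.mkₐ_eq_mk,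
          Ideal.Quotient.eq_zero_iff_mem]
        exact Ideal.subset_span (by simp)
      have hmk2 : Polynomial.aeval (Ideal.Quotient.mkₐ k I' (X 1)) R2 = 0 := by
        rw [Polynomial.aeval_algHom_apply, ← hG2def, Ideal.Quotient.mkₐ_eq_mk,
          Ideal.Quotient.eq_zero_iff_mem]
        exact Ideal.subset_span (by simp)
      have hint1 : IsIntegral k (Ideal.Quotient.mkₐ k I' (X 0)) :=
        ⟨R1 * Polynomial.C R1.leadingCoeff⁻¹, Polynomial.monic_mul_leadingCoeff_inv hR1ne,
          by rw [← Polynomial.aeval_def, map_mul, hmk1, zero_mul]⟩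
      have hint2 : IsIntegral k (Ideal.Quotient.mkₐ k I' (X 1)) :=
        ⟨R2 * Polynomial.C R2.leadingCoeff⁻¹, Polynomial.monic_mul_leadingCoeff_inv hR2ne,
          by rw [← Polynomial.aeval_def, map_mul, hmk2, zero_mul]⟩
      have hadj : Algebra.adjoin k
          (Set.range fun s : Fin 2 => Ideal.Quotient.mkₐ k I' (X s)) = ⊤ := by
        have hrg : (Set.range fun s : Fin 2 => Ideal.Quotient.mkₐ k I' (X s))
            = (Ideal.Quotient.mkₐ k I') '' (Set.range X) := by
          rw [← Set.range_comp]; rfl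
        rw [hrg, Algebra.adjoin_image, MvPolynomial.adjoin_range_X, Algebra.map_top,
          (AlgHom.range_eq_top _).mpr (Ideal.Quotient.mkₐ_surjective k I')]
      have hintall : ∀ x ∈ (Set.range fun s : Fin 2 => Ideal.Quotient.mkₐ k I' (X s)),
          IsIntegral k x := by
        rintro x ⟨s, rfl⟩
        fin_cases s
        · exact hint1
        · exact hint2
      have hfg := fg_adjoin_of_finite (Set.finite_range _) hintall
      rw [hadj] at hfg
      exact ⟨by rwa [Algebra.top_toSubmodule] at hfg⟩
end

section
/- Let k be a field, α : k[T1,T2] → k a linear functional, and U1, U2 ∈ k[T] nonzero one-variable polynomials of degrees r and r' respectively, such that α(U1(T1)·f) = 0 and α(U2(T2)·f) = 0 for every f ∈ k[T1,T2]. Let Û1(T) := T^r·U1(1/T) and Û2(T) := T^{r'}·U2(1/T) be the reversed polynomials (the j-th coefficient of Û1 is the (r−j)-th coefficient of U1, and similarly for Û2). Then every coefficient w_{i,j} of the power series Z_α(T1,T2)·Û1(T1)·Û2(T2) with i ≥ r or j ≥ r' vanishes; in particular this product is a polynomial whose degree in T1 is less than r and whose degree in T2 is less than r'. -/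
open MvPolynomial

private lemma aux_coeff_aeval_X {k : Type*} [CommRing k] {i j : Fin 2} (h : i ≠ j)
    (P : Polynomial k) (c : Fin 2 →₀ ℕ) (hc : c j ≠ 0) :
    coeff c (Polynomial.aeval (X i : MvPolynomial (Fin 2) k) P) = 0 := by
  classical
  rw [Polynomial.aeval_eq_sum_range, coeff_sum]
  apply Finset.sum_eq_zero
  intro n _
  rw [coeff_smul, coeff_X_pow, if_neg, smul_zero]
  intro heq
  rw [← heq, Finsupp.single_apply, if_neg h] at hc
  exact hc rfl

private lemma aux_key {k : Type*} [Field k]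
    (α : MvPolynomial (Fin 2) k →ₗ[k] k)
    (Z : MvPowerSeries (Fin 2) k)
    (hZ : ∀ d : Fin 2 →₀ ℕ, MvPowerSeries.coeff d Z = α (monomial d 1))
    (i : Fin 2) (U : Polynomial k) (B : MvPolynomial (Fin 2) k)
    (hB : ∀ c : Fin 2 →₀ ℕ, c i ≠ 0 → coeff c B = 0)
    (hann : ∀ f : MvPolynomial (Fin 2) k,
      α (Polynomial.aeval (X i : MvPolynomial (Fin 2) k) U * f) = 0)
    (d : Fin 2 →₀ ℕ) (hd : U.natDegree ≤ d i) :
    MvPowerSeries.coeff d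
      (Z * ((Polynomial.aeval (X i : MvPolynomial (Fin 2) k) U.reverse :
              MvPolynomial (Fin 2) k) : MvPowerSeries (Fin 2) k)
        * (B : MvPowerSeries (Fin 2) k)) = 0 := by
  classical
  set r := U.natDegree with hr
  -- expand the reversed polynomial
  have hA : (Polynomial.aeval (X i : MvPolynomial (Fin 2) k) U.reverse :
      MvPolynomial (Fin 2) k) =
      ∑ m ∈ Finset.range (r + 1), U.reverse.coeff m • (X i : MvPolynomial (Fin 2) k) ^ m :=
    Polynomial.aeval_eq_sum_range' (lt_of_le_of_lt U.reverse_natDegree_le (Nat.lt_succ_self r)) _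
  have hAB : (Polynomial.aeval (X i : MvPolynomial (Fin 2) k) U.reverse *
      B : MvPolynomial (Fin 2) k) =
      ∑ m ∈ Finset.range (r + 1), ∑ c ∈ B.support,
        monomial (Finsupp.single i m + c) (U.reverse.coeff m * B.coeff c) := by
    rw [hA, Finset.sum_mul]
    refine Finset.sum_congr rfl fun m _ => ?_
    conv_lhs => rw [B.as_sum]
    rw [Finset.mul_sum]
    refine Finset.sum_congr rfl fun c _ => ?_
    rw [smul_mul_assoc, X_pow_eq_monomial, monomial_mul, smul_monomial, one_mul,
      smul_eq_mul]
  have hmono : ∀ (e : Fin 2 →₀ ℕ) (a : k),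
      MvPowerSeries.coeff d (Z * MvPowerSeries.monomial e a) =
        if e ≤ d then α (monomial (d - e) 1) * a else 0 := by
    intro e a
    rw [MvPowerSeries.coeff_mul_monomial, hZ]
  have hsum : MvPowerSeries.coeff d
      (Z * ((Polynomial.aeval (X i : MvPolynomial (Fin 2) k) U.reverse :
              MvPolynomial (Fin 2) k) : MvPowerSeries (Fin 2) k)
        * (B : MvPowerSeries (Fin 2) k)) =
      ∑ m ∈ Finset.range (r + 1), ∑ c ∈ B.support,
        if Finsupp.single i m + c ≤ d then
          α (monomial (d - (Finsupp.single i m + c)) 1) * (U.reverse.coeff m * B.coeff c)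
        else 0 := by
    rw [mul_assoc, ← MvPolynomial.coe_mul, hAB]
    rw [show ((∑ m ∈ Finset.range (r + 1), ∑ c ∈ B.support,
        monomial (Finsupp.single i m + c) (U.reverse.coeff m * B.coeff c) :
          MvPolynomial (Fin 2) k) : MvPowerSeries (Fin 2) k) =
        ∑ m ∈ Finset.range (r + 1), ∑ c ∈ B.support,
          MvPowerSeries.monomial (Finsupp.single i m + c)
            (U.reverse.coeff m * B.coeff c) by
      rw [← MvPolynomial.coeToMvPowerSeries.ringHom_apply, map_sum]
      refine Finset.sum_congr rfl fun m _ => ?_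
      rw [map_sum]
      exact Finset.sum_congr rfl fun c _ => by
        rw [MvPolynomial.coeToMvPowerSeries.ringHom_apply, MvPolynomial.coe_monomial]]
    simp only [Finset.mul_sum, map_sum, hmono]
  rw [hsum, Finset.sum_comm]
  apply Finset.sum_eq_zero
  intro c hc
  have hci : c i = 0 := by
    by_contra h
    exact mem_support_iff.mp hc (hB c h)
  by_cases hcd : c ≤ d
  · have hcond : ∀ m ∈ Finset.range (r + 1), Finsupp.single i m + c ≤ d := by
      intro m hm
      intro s
      by_cases hs : s = i
      · subst hs
        simp only [Finsupp.add_apply, Finsupp.single_eq_same, hci, add_zero]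
        exact le_trans (Nat.lt_succ_iff.mp (Finset.mem_range.mp hm)) hd
      · have his : i ≠ s := fun h => hs h.symm
        simpa [Finsupp.single_apply, his] using hcd s
    rw [Finset.sum_congr rfl fun m hm => if_pos (hcond m hm)]
    have hs : (∑ m ∈ Finset.range (r + 1),
        U.reverse.coeff m • (monomial (d - (Finsupp.single i m + c)) (1 : k))) =
        Polynomial.aeval (X i : MvPolynomial (Fin 2) k) U *
          monomial (d - (Finsupp.single i r + c)) 1 := by
      rw [Polynomial.aeval_eq_sum_range' (Nat.lt_succ_self r ), Finset.sum_mul]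
      conv_lhs => rw [← Finset.sum_range_reflect]
      refine Finset.sum_congr rfl fun l hl => ?_
      have hl' : l ≤ r := Nat.lt_succ_iff.mp (Finset.mem_range.mp hl)
      simp only [Nat.add_sub_cancel]
      rw [Polynomial.coeff_reverse, ← hr, Polynomial.revAt_le (Nat.sub_le r l),
        Nat.sub_sub_self hl']
      rw [smul_mul_assoc, X_pow_eq_monomial, monomial_mul, one_mul]
      have hexp : d - (Finsupp.single i (r - l) + c) =
          Finsupp.single i l + (d - (Finsupp.single i r + c)) := by
        ext s
        by_cases hsi : s = i
        · subst hsi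
          simp only [Finsupp.tsub_apply, Finsupp.add_apply, Finsupp.single_eq_same, hci,
            add_zero]
          omega
        · have his : i ≠ s := fun h => hsi h.symm
          simp only [Finsupp.tsub_apply, Finsupp.add_apply, Finsupp.single_apply,
            if_neg his]
          omega
      rw [hexp]
    calc ∑ m ∈ Finset.range (r + 1),
          α (monomial (d - (Finsupp.single i m + c)) 1) * (U.reverse.coeff m * B.coeff c)
        = (∑ m ∈ Finset.range (r + 1),
            U.reverse.coeff m * α (monomial (d - (Finsupp.single i m + c)) 1)) *
            B.coeff c := by
          rw [Finset.sum_mul]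
          exact Finset.sum_congr rfl fun m _ => by ring
      _ = α (∑ m ∈ Finset.range (r + 1),
            U.reverse.coeff m • (monomial (d - (Finsupp.single i m + c)) (1 : k))) *
            B.coeff c := by
          rw [map_sum]
          simp only [map_smul, smul_eq_mul]
      _ = 0 := by rw [hs, hann, zero_mul]
  · apply Finset.sum_eq_zero
    intro m _
    rw [if_neg]
    intro hle
    exact hcd (le_trans (le_add_self) hle)

/-- If `α` annihilates all multiples of `U₁(T₁)` and of `U₂(T₂)`, where `U₁, U₂` are nonzero
one-variable polynomials of degrees `r, r'`, then in the product
`Z_α(T₁,T₂)·Û₁(T₁)·Û₂(T₂)` (with `Û` the reversed polynomial, whose `j`-th coefficient is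
the `(r-j)`-th coefficient of `U`) every coefficient `w_{i,j}` with `i ≥ r` or `j ≥ r'`
vanishes; in particular the product is a polynomial of degree `< r` in `T₁`
and `< r'` in `T₂`. -/
theorem coeff_vanish_of_annihilating (k : Type*) [Field k]
    (α : MvPolynomial (Fin 2) k →ₗ[k] k)
    (Z : MvPowerSeries (Fin 2) k)
    (hZ : ∀ d : Fin 2 →₀ ℕ, MvPowerSeries.coeff d Z = α (monomial d 1))
    (U1 U2 : Polynomial k) (r r' : ℕ)
    (hU1 : U1 ≠ 0) (hU2 : U2 ≠ 0)
    (hr : U1.natDegree = r) (hr' : U2.natDegree = r')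
    (hann1 : ∀ f : MvPolynomial (Fin 2) k,
      α (Polynomial.aeval (X 0 : MvPolynomial (Fin 2) k) U1 * f) = 0)
    (hann2 : ∀ f : MvPolynomial (Fin 2) k,
      α (Polynomial.aeval (X 1 : MvPolynomial (Fin 2) k) U2 * f) = 0) :
    (∀ d : Fin 2 →₀ ℕ, (r ≤ d 0 ∨ r' ≤ d 1) →
      MvPowerSeries.coeff d
        (Z * ((Polynomial.aeval (X 0 : MvPolynomial (Fin 2) k) U1.reverse :
                MvPolynomial (Fin 2) k) : MvPowerSeries (Fin 2) k)
           * ((Polynomial.aeval (X 1 : MvPolynomial (Fin 2) k) U2.reverse :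
                MvPolynomial (Fin 2) k) : MvPowerSeries (Fin 2) k)) = 0) ∧
    ∃ P : MvPolynomial (Fin 2) k,
      (P : MvPowerSeries (Fin 2) k) =
        Z * ((Polynomial.aeval (X 0 : MvPolynomial (Fin 2) k) U1.reverse :
                MvPolynomial (Fin 2) k) : MvPowerSeries (Fin 2) k)
          * ((Polynomial.aeval (X 1 : MvPolynomial (Fin 2) k) U2.reverse :
                MvPolynomial (Fin 2) k) : MvPowerSeries (Fin 2) k) ∧
      ∀ d ∈ P.support, d 0 < r ∧ d 1 < r' := by
  classical
  set A : MvPolynomial (Fin 2) k :=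
    Polynomial.aeval (X 0 : MvPolynomial (Fin 2) k) U1.reverse with hAdef
  set B : MvPolynomial (Fin 2) k :=
    Polynomial.aeval (X 1 : MvPolynomial (Fin 2) k) U2.reverse with hBdef
  have part1 : ∀ d : Fin 2 →₀ ℕ, (r ≤ d 0 ∨ r' ≤ d 1) →
      MvPowerSeries.coeff d
        (Z * (A : MvPowerSeries (Fin 2) k) * (B : MvPowerSeries (Fin 2) k)) = 0 := by
    intro d hd
    rcases hd with hd | hd
    · exact aux_key α Z hZ 0 U1 B
        (fun c hc => aux_coeff_aeval_X (by decide) U2.reverse c hc) hann1 d (hr ▸ hd)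
    · rw [mul_right_comm]
      exact aux_key α Z hZ 1 U2 A
        (fun c hc => aux_coeff_aeval_X (by decide) U1.reverse c hc) hann2 d (hr' ▸ hd)
  refine ⟨part1, ?_⟩
  set S := Z * (A : MvPowerSeries (Fin 2) k) * (B : MvPowerSeries (Fin 2) k) with hS
  have hsplit : ∀ f : Fin 2 →₀ ℕ,
      f = Finsupp.single 0 (f 0) + Finsupp.single 1 (f 1) := by
    intro f
    ext s
    fin_cases s <;> simp [Finsupp.single_apply]
  set P : MvPolynomial (Fin 2) k :=
    ∑ x ∈ Finset.range r ×ˢ Finset.range r',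
      monomial (Finsupp.single 0 x.1 + Finsupp.single 1 x.2)
        (MvPowerSeries.coeff (Finsupp.single 0 x.1 + Finsupp.single 1 x.2) S)
    with hP
  have key0 : ∀ (x : ℕ × ℕ),
      (Finsupp.single 0 x.1 + Finsupp.single 1 x.2 : Fin 2 →₀ ℕ) 0 = x.1 ∧
      (Finsupp.single 0 x.1 + Finsupp.single 1 x.2 : Fin 2 →₀ ℕ) 1 = x.2 := by
    intro x
    constructor <;> simp [Finsupp.single_apply]
  have hcoeffP : ∀ d : Fin 2 →₀ ℕ,
      MvPolynomial.coeff d P = MvPowerSeries.coeff d S := by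
    intro d
    rw [hP, coeff_sum]
    by_cases hdlt : d 0 < r ∧ d 1 < r'
    · rw [Finset.sum_eq_single (d 0, d 1)]
      · rw [coeff_monomial, if_pos (hsplit d).symm, ← hsplit d]
      · intro x hx hne
        rw [coeff_monomial, if_neg]
        intro heq
        apply hne
        have h0 := (key0 x).1
        have h1 := (key0 x).2
        rw [heq] at h0 h1
        exact Prod.ext h0.symm h1.symm
      · intro hmem
        exact absurd (Finset.mem_product.mpr ⟨Finset.mem_range.mpr hdlt.1,
          Finset.mem_range.mpr hdlt.2⟩) hmem
    · have hd' : r ≤ d 0 ∨ r' ≤ d 1 := by omega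
      rw [part1 d hd']
      apply Finset.sum_eq_zero
      intro x hx
      rw [coeff_monomial, if_neg]
      intro heq
      have hx' := Finset.mem_product.mp hx
      have h0 := (key0 x).1
      have h1 := (key0 x).2
      rw [heq] at h0 h1
      have := Finset.mem_range.mp hx'.1
      have := Finset.mem_range.mp hx'.2
      omega
  have hPeq : (P : MvPowerSeries (Fin 2) k) = S := by
    apply MvPowerSeries.ext
    intro d
    rw [MvPolynomial.coeff_coe, hcoeffP]
  refine ⟨P, hPeq, ?_⟩
  intro d hdsupp
  have hne := mem_support_iff.mp hdsupp
  constructor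
  · by_contra hcon
    exact hne (by rw [hcoeffP]; exact part1 d (Or.inl (le_of_not_gt hcon)))
  · by_contra hcon
    exact hne (by rw [hcoeffP]; exact part1 d (Or.inr (le_of_not_gt hcon)))
end

section
/- Let k be a field and α : k[T1,T2] → k a linear functional. Then α is recognizable if and only if the linear map h : k[T1,T2] → k[T1,T2]* defined by h(z)(f) = α(z·f) has finite rank, i.e., the range of h is a finite-dimensional k-vector space. (The matrix of h in the monomial bases is the Hankel matrix H_α whose ((m1,k1),(m2,k2))-entry is α_{m1+m2,k1+k2}; so α is recognizable if and only if the Hankel matrix H_α has finite rank.) -/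
open MvPolynomial

/-- `α` is recognizable iff the linear map `h : k[T₁,T₂] → k[T₁,T₂]*`, `h(z)(f) = α(z·f)`
(whose matrix in the monomial bases is the Hankel matrix of `α`) has finite rank. -/
theorem recognizable_iff_hankel_finite_rank (k : Type*) [Field k]
    (α : MvPolynomial (Fin 2) k →ₗ[k] k)
    (h : MvPolynomial (Fin 2) k →ₗ[k] (MvPolynomial (Fin 2) k →ₗ[k] k))
    (hh : ∀ z f, h z f = α (z * f)) :
    Recognizable k α ↔ Module.Finite k (LinearMap.range h) := by
  constructor
  · rintro ⟨I, hI0, hIfin⟩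
    -- h vanishes on I (as k-submodule)
    have hker : I.restrictScalars k ≤ LinearMap.ker h := by
      intro z hz
      rw [LinearMap.mem_ker]
      apply LinearMap.ext; intro f
      simp only [LinearMap.zero_apply, hh]
      exact hI0 _ (I.mul_mem_right f hz)
    -- lift h through the quotient
    let φ := Submodule.liftQ (I.restrictScalars k) h hker
    have hcomp : h = φ.comp (Submodule.mkQ _) := by
      apply LinearMap.ext; intro z; simp [φ]
    have : FiniteDimensional k (MvPolynomial (Fin 2) k ⧸ I.restrictScalars k) :=
      Module.Finite.equiv (Submodule.Quotient.restrictScalarsEquiv k I).symm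
    have hr : LinearMap.range h = LinearMap.range φ := by
      rw [hcomp, LinearMap.range_comp, Submodule.range_mkQ, Submodule.map_top]
    rw [hr]
    exact Module.Finite.range φ
  · intro hfin
    -- take I := kernel of h, viewed as an ideal
    let I : Ideal (MvPolynomial (Fin 2) k) :=
      { carrier := {z | h z = 0}
        add_mem' := fun {a b} ha hb => by
          simp only [Set.mem_setOf_eq] at *
          rw [map_add, ha, hb, add_zero]
        zero_mem' := by simp
        smul_mem' := fun c z hz => by
          simp only [Set.mem_setOf_eq] at *
          apply LinearMap.ext; intro f
          simp only [smul_eq_mul, LinearMap.zero_apply, hh]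
          have h1 : α (z * (c * f)) = 0 := by
            rw [← hh, hz, LinearMap.zero_apply]
          rw [← h1]; ring_nf }
    have hmem : ∀ z, z ∈ I ↔ h z = 0 := fun z => Iff.rfl
    refine ⟨I, ?_, ?_⟩
    · intro z hz
      have hz0 : h z = 0 := (hmem z).1 hz
      have := congrFun (congrArg DFunLike.coe hz0) 1
      simpa [hh] using this
    · have hker : I.restrictScalars k = LinearMap.ker h.rangeRestrict := by
        rw [LinearMap.ker_rangeRestrict]
        ext z
        simp [hmem, LinearMap.mem_ker]
      let φ := Submodule.liftQ (R₂ := k) (M₂ := LinearMap.range h) (I.restrictScalars k) h.rangeRestrict (le_of_eq hker)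
      have hinj : Function.Injective φ :=
        LinearMap.ker_eq_bot.mp (Submodule.ker_liftQ_eq_bot _ _ _ (le_of_eq hker.symm))
      haveI : FiniteDimensional k (MvPolynomial (Fin 2) k ⧸ I.restrictScalars k) :=
        FiniteDimensional.of_injective (V₂ := LinearMap.range h) φ hinj
      exact Module.Finite.equiv (Submodule.Quotient.restrictScalarsEquiv k I)
end

section
/- Let k be a field and α : k[T1,T2] → k a recognizable linear functional. Then the syntactic ideal I_α has finite codimension, so A_α := k[T1,T2]/I_α is a finite-dimensional commutative k-algebra; the functional α descends to a well-defined linear functional ᾱ on A_α, and the symmetric bilinear form (x̄, ȳ) ↦ ᾱ(x̄·ȳ) on A_α is nondegenerate. In particular A_α is a commutative Frobenius algebra generated by the images of T1 and T2, with nondegenerate trace form ᾱ. -/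
open MvPolynomial

/-- The syntactic ideal `I_α = {z | α(z·f) = 0 for all f}` of a linear functional `α`. -/
def synIdeal (k : Type*) [Field k] (α : MvPolynomial (Fin 2) k →ₗ[k] k) :
    Ideal (MvPolynomial (Fin 2) k) where
  carrier := {z | ∀ f : MvPolynomial (Fin 2) k, α (z * f) = 0}
  add_mem' := by
    intro a b ha hb f
    rw [add_mul, map_add, ha f, hb f, add_zero]
  zero_mem' := by
    intro f
    rw [zero_mul, map_zero]
  smul_mem' := by
    intro c z hz f
    have h : (c • z) * f = z * (c * f) := by rw [smul_eq_mul]; ring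
    rw [h]
    exact hz (c * f)

/-- For recognizable `α`, the quotient `A_α = k[T₁,T₂]/I_α` by the syntactic ideal is a
finite-dimensional commutative algebra, `α` descends to a functional `ᾱ` on `A_α`, the
bilinear form `(x,y) ↦ ᾱ(xy)` is nondegenerate, and `A_α` is generated by the images of
`T₁, T₂`: a commutative Frobenius algebra on two generators with nondegenerate trace. -/
theorem frobenius_of_recognizable (k : Type*) [Field k]
    (α : MvPolynomial (Fin 2) k →ₗ[k] k) (hrec : Recognizable k α) :
    FiniteDimensional k (MvPolynomial (Fin 2) k ⧸ synIdeal k α) ∧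
    ∃ abar : (MvPolynomial (Fin 2) k ⧸ synIdeal k α) →ₗ[k] k,
      (∀ z : MvPolynomial (Fin 2) k, abar (Ideal.Quotient.mk (synIdeal k α) z) = α z) ∧
      (∀ x : MvPolynomial (Fin 2) k ⧸ synIdeal k α, x ≠ 0 → ∃ y, abar (x * y) ≠ 0) ∧
      Algebra.adjoin k {Ideal.Quotient.mk (synIdeal k α) (X 0),
        Ideal.Quotient.mk (synIdeal k α) (X 1)} = ⊤ := by
  obtain ⟨I, hIker, hIfin⟩ := hrec
  set R := MvPolynomial (Fin 2) k
  have hIle : I ≤ synIdeal k α := by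
    intro z hz f
    exact hIker _ (I.mul_mem_right f hz)
  -- finite dimensionality
  have hfin : FiniteDimensional k (R ⧸ synIdeal k α) := by
    let p : Submodule k R := (I : Submodule R R).restrictScalars k
    let q : Submodule k R := ((synIdeal k α : Submodule R R)).restrictScalars k
    have hpq : p ≤ q := hIle
    have e1 : (R ⧸ p) ≃ₗ[k] (R ⧸ I) := Submodule.Quotient.restrictScalarsEquiv k _
    have e2 : (R ⧸ q) ≃ₗ[k] (R ⧸ synIdeal k α) := Submodule.Quotient.restrictScalarsEquiv k _
    have h1 : FiniteDimensional k (R ⧸ p) := LinearEquiv.finiteDimensional e1.symm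
    have hsurj : Function.Surjective (Submodule.mapQ p q LinearMap.id hpq) := by
      intro x
      obtain ⟨z, rfl⟩ := Submodule.Quotient.mk_surjective q x
      exact ⟨Submodule.Quotient.mk z, rfl⟩
    have h2 : FiniteDimensional k (R ⧸ q) :=
      Module.Finite.of_surjective (Submodule.mapQ p q LinearMap.id hpq) hsurj
    exact LinearEquiv.finiteDimensional e2
  refine ⟨hfin, ?_⟩
  -- the descended functional
  have hker : ((synIdeal k α : Submodule R R)).restrictScalars k ≤ LinearMap.ker α := by
    intro z hz
    simpa using hz 1
  let abar : (R ⧸ synIdeal k α) →ₗ[k] k :=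
    (Submodule.liftQ _ α hker).comp
      (Submodule.Quotient.restrictScalarsEquiv k (synIdeal k α : Submodule R R)).symm.toLinearMap
  have habar : ∀ z : R, abar (Ideal.Quotient.mk (synIdeal k α) z) = α z := by
    intro z
    simp [abar, Submodule.Quotient.restrictScalarsEquiv_symm_mk]
    rfl
  refine ⟨abar, habar, ?_, ?_⟩
  · -- nondegeneracy
    intro x hx
    obtain ⟨z, rfl⟩ := Ideal.Quotient.mk_surjective x
    have hz : z ∉ synIdeal k α := fun h => hx (Ideal.Quotient.eq_zero_iff_mem.2 h)
    have : ¬ ∀ f : R, α (z * f) = 0 := hz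
    push_neg at this
    obtain ⟨f, hf⟩ := this
    refine ⟨Ideal.Quotient.mk _ f, ?_⟩
    rw [← map_mul, habar]
    exact hf
  · -- generation
    have hrange : (Set.range (X : Fin 2 → R)) = {(X 0 : R), X 1} := by
      ext p
      constructor
      · rintro ⟨i, rfl⟩
        fin_cases i <;> simp
      · rintro (rfl | rfl) <;> [exact ⟨0, rfl⟩; exact ⟨1, rfl⟩]
    have htop : Algebra.adjoin k ({(X 0 : R), X 1}) = ⊤ := by
      rw [← hrange]; exact MvPolynomial.adjoin_range_X
    have himg := Algebra.adjoin_image k (Ideal.Quotient.mkₐ k (synIdeal k α))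
      ({(X 0 : R), X 1})
    rw [htop] at himg
    have : (Ideal.Quotient.mkₐ k (synIdeal k α)) '' ({(X 0 : R), X 1}) =
        {Ideal.Quotient.mk (synIdeal k α) (X 0), Ideal.Quotient.mk (synIdeal k α) (X 1)} := by
      simp [Set.image_pair]
    rw [this] at himg
    rw [himg, Algebra.map_top]
    exact (AlgHom.range_eq_top _).2 (Ideal.Quotient.mkₐ_surjective k _)
end

section
/- Let k be a field, B a finite-dimensional commutative k-algebra, β : B → k a linear functional such that the bilinear form (x,y) ↦ β(xy) on B is nondegenerate, and ψ : k[T1,T2] → B a surjective k-algebra homomorphism. Set α := β ∘ ψ : k[T1,T2] → k. Then the syntactic ideal of α equals ker ψ, i.e., I_α = ker ψ. In particular α is recognizable, dim_k(k[T1,T2]/I_α) = dim_k B, and Z_α = Σ_{ℓ,g ≥ 0} β(g1^ℓ g2^g) T1^ℓ T2^g where g1 = ψ(T1) and g2 = ψ(T2). -/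
open MvPolynomial

/-- If `B` is a finite-dimensional commutative Frobenius `k`-algebra with nondegenerate
trace `β` and `ψ : k[T₁,T₂] → B` is a surjective algebra map, then for `α = β ∘ ψ`
the syntactic ideal equals `ker ψ`; in particular `α` is recognizable,
`dim k[T₁,T₂]/I_α = dim B`, and the coefficients of `Z_α` are `β(g₁^ℓ g₂^g)`
for `g₁ = ψ(T₁)`, `g₂ = ψ(T₂)`. -/
theorem synIdeal_eq_ker_of_frobenius (k : Type*) [Field k]
    (B : Type*) [CommRing B] [Algebra k B] [FiniteDimensional k B]
    (β : B →ₗ[k] k)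
    (hβ : ∀ x : B, x ≠ 0 → ∃ y : B, β (x * y) ≠ 0)
    (ψ : MvPolynomial (Fin 2) k →ₐ[k] B)
    (hψ : Function.Surjective ψ)
    (α : MvPolynomial (Fin 2) k →ₗ[k] k)
    (hα : ∀ z : MvPolynomial (Fin 2) k, α z = β (ψ z)) :
    synIdeal k α = RingHom.ker ψ ∧
    Recognizable k α ∧
    Module.finrank k (MvPolynomial (Fin 2) k ⧸ synIdeal k α) = Module.finrank k B ∧
    (∀ l g : ℕ, α ((X 0 : MvPolynomial (Fin 2) k) ^ l * (X 1) ^ g) =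
      β (ψ (X 0) ^ l * ψ (X 1) ^ g)) := by
  have hker : synIdeal k α = RingHom.ker ψ := by
    ext z
    constructor
    · intro hz
      rw [RingHom.mem_ker]
      by_contra hne
      obtain ⟨y, hy⟩ := hβ (ψ z) hne
      obtain ⟨f, rfl⟩ := hψ y
      exact hy (by simpa [hα, map_mul] using hz f)
    · intro hz f
      rw [hα, map_mul, RingHom.mem_ker.mp hz, zero_mul, map_zero]
  have e : (MvPolynomial (Fin 2) k ⧸ RingHom.ker ψ) ≃ₐ[k] B :=
    Ideal.quotientKerAlgEquivOfSurjective hψ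
  have hfd : FiniteDimensional k (MvPolynomial (Fin 2) k ⧸ RingHom.ker ψ) :=
    Module.Finite.equiv e.symm.toLinearEquiv
  refine ⟨hker, ⟨RingHom.ker ψ, fun x hx => ?_, hfd⟩, ?_, fun l g => by
    rw [hα, map_mul, map_pow, map_pow]⟩
  · rw [hα, RingHom.mem_ker.mp hx, map_zero]
  · rw [hker]
    exact e.toLinearEquiv.finrank_eq
end

section
/- Let k be a field. Suppose (B, β, ψ) and (B', β', ψ') are two triples where B, B' are finite-dimensional commutative k-algebras, β : B → k and β' : B' → k are linear functionals whose associated bilinear forms (x,y) ↦ β(xy) and (x,y) ↦ β'(xy) are nondegenerate, and ψ : k[T1,T2] → B, ψ' : k[T1,T2] → B' are surjective k-algebra homomorphisms. If β ∘ ψ = β' ∘ ψ' as linear functionals on k[T1,T2], then there exists a k-algebra isomorphism φ : B → B' such that φ ∘ ψ = ψ' and β' ∘ φ = β. (Hence recognizable series are classified by isomorphism classes of data (B, g1, g2, β): a commutative Frobenius algebra B generated by two elements g1, g2 with a nondegenerate trace β.) -/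
open MvPolynomial

/-- Two commutative Frobenius algebra presentations `(B, β, ψ)` and `(B', β', ψ')` of the
same functional `β ∘ ψ = β' ∘ ψ'` on `k[T₁,T₂]` are isomorphic: there is an algebra
isomorphism `φ : B ≃ B'` with `φ ∘ ψ = ψ'` and `β' ∘ φ = β`. -/
theorem frobenius_presentation_unique (k : Type*) [Field k]
    (B B' : Type*) [CommRing B] [Algebra k B] [FiniteDimensional k B]
    [CommRing B'] [Algebra k B'] [FiniteDimensional k B']
    (β : B →ₗ[k] k) (β' : B' →ₗ[k] k)
    (hβ : ∀ x : B, x ≠ 0 → ∃ y : B, β (x * y) ≠ 0)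
    (hβ' : ∀ x : B', x ≠ 0 → ∃ y : B', β' (x * y) ≠ 0)
    (ψ : MvPolynomial (Fin 2) k →ₐ[k] B) (ψ' : MvPolynomial (Fin 2) k →ₐ[k] B')
    (hψ : Function.Surjective ψ) (hψ' : Function.Surjective ψ')
    (hcomp : ∀ z : MvPolynomial (Fin 2) k, β (ψ z) = β' (ψ' z)) :
    ∃ φ : B ≃ₐ[k] B', (∀ z : MvPolynomial (Fin 2) k, φ (ψ z) = ψ' z) ∧
      (∀ b : B, β' (φ b) = β b) := by
  have hker : RingHom.ker (ψ : MvPolynomial (Fin 2) k →+* B)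
      = RingHom.ker (ψ' : MvPolynomial (Fin 2) k →+* B') := by
    ext z
    simp only [RingHom.mem_ker, AlgHom.coe_toRingHom]
    constructor
    · intro h
      by_contra hz
      obtain ⟨y, hy⟩ := hβ' (ψ' z) hz
      obtain ⟨w, rfl⟩ := hψ' y
      rw [← map_mul, ← hcomp, map_mul, h, zero_mul, map_zero] at hy
      exact hy rfl
    · intro h
      by_contra hz
      obtain ⟨y, hy⟩ := hβ (ψ z) hz
      obtain ⟨w, rfl⟩ := hψ y
      rw [← map_mul, hcomp, map_mul, h, zero_mul, map_zero] at hy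
      exact hy rfl
  let e := Ideal.quotientKerAlgEquivOfSurjective hψ
  let e' := Ideal.quotientKerAlgEquivOfSurjective hψ'
  let q := Ideal.quotientEquivAlgOfEq k hker
  refine ⟨e.symm.trans (q.trans e'), ?_, ?_⟩
  · intro z
    have h1 : e (Ideal.Quotient.mk _ z) = ψ z := rfl
    have h2 : e' (Ideal.Quotient.mk _ z) = ψ' z := rfl
    have h3 : q (Ideal.Quotient.mk (RingHom.ker ψ) z) = Ideal.Quotient.mk (RingHom.ker ψ') z := rfl
    simp only [AlgEquiv.trans_apply, ← h1, AlgEquiv.symm_apply_apply]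
    show e' (q (e.symm (e _))) = _
    rw [AlgEquiv.symm_apply_apply, h3, h2]
  · intro b
    obtain ⟨z, rfl⟩ := hψ b
    have h1 : e (Ideal.Quotient.mk _ z) = ψ z := rfl
    have h2 : e' (Ideal.Quotient.mk _ z) = ψ' z := rfl
    have h3 : q (Ideal.Quotient.mk (RingHom.ker ψ) z) = Ideal.Quotient.mk (RingHom.ker ψ') z := rfl
    simp only [AlgEquiv.trans_apply, ← h1, AlgEquiv.symm_apply_apply]
    show β' (e' (q (e.symm (e _)))) = _
    rw [AlgEquiv.symm_apply_apply, h3, h2, h1]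
    exact (hcomp z).symm
end

section
/- Let k be a field and α : k[T1,T2] → k a linear functional. Then the syntactic ideal I_α has codimension 1 (i.e., dim_k k[T1,T2]/I_α = 1) if and only if there exist λ ∈ k with λ ≠ 0 and λ1, λ2 ∈ k such that α(T1^ℓ T2^g) = λ·λ1^ℓ·λ2^g for all ℓ, g ≥ 0. (In this case I_α is the maximal ideal (T1 − λ1, T2 − λ2), so the codimension-1 recognizable series are parametrized by triples (λ1, λ2, λ) ∈ k × k × k^×.) -/
open MvPolynomial

lemma pow_mul_eq_monomial {k : Type*} [Field k] (m : Fin 2 →₀ ℕ) :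
    (X 0 : MvPolynomial (Fin 2) k) ^ (m 0) * (X 1) ^ (m 1) = monomial m 1 := by
  have hm : (Finsupp.single (0 : Fin 2) (m 0) + Finsupp.single 1 (m 1)) = m := by
    ext a
    fin_cases a <;> simp
  rw [X_pow_eq_monomial, X_pow_eq_monomial, monomial_mul, one_mul, hm]

set_option synthInstance.maxHeartbeats 1000000 in
/-- The syntactic ideal of `α` has codimension 1 iff `α(T₁^ℓ T₂^g) = λ·λ₁^ℓ·λ₂^g` for some
`λ ≠ 0` and scalars `λ₁, λ₂`. -/

theorem codim_one_iff_geometric (k : Type*) [Field k]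
    (α : MvPolynomial (Fin 2) k →ₗ[k] k) :
    Module.finrank k (MvPolynomial (Fin 2) k ⧸ synIdeal k α) = 1 ↔
      ∃ (lam l1 l2 : k), lam ≠ 0 ∧
        ∀ l g : ℕ, α ((X 0 : MvPolynomial (Fin 2) k) ^ l * (X 1) ^ g) =
          lam * l1 ^ l * l2 ^ g := by
  set I := synIdeal k α with hI
  constructor
  · intro h
    have hone : (1 : MvPolynomial (Fin 2) k ⧸ I) ≠ 0 := by
      intro h0
      have hs : Subsingleton (MvPolynomial (Fin 2) k ⧸ I) :=
        subsingleton_of_zero_eq_one h0.symm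
      rw [Module.finrank_zero_of_subsingleton] at h
      exact one_ne_zero h.symm
    have hspan := (finrank_eq_one_iff_of_nonzero' (1 : MvPolynomial (Fin 2) k ⧸ I) hone).mp h
    -- every polynomial is congruent to a constant mod I
    have hconst : ∀ p : MvPolynomial (Fin 2) k, ∃ c : k, p - C c ∈ I := by
      intro p
      obtain ⟨c, hc⟩ := hspan (Ideal.Quotient.mk I p)
      refine ⟨c, ?_⟩
      rw [← Ideal.Quotient.eq_zero_iff_mem, map_sub, ← hc]
      have : (Ideal.Quotient.mk I) (C c) = c • (1 : MvPolynomial (Fin 2) k ⧸ I) := by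
        rw [← Ideal.Quotient.mkₐ_eq_mk k,
          show (C c : MvPolynomial (Fin 2) k) = c • 1 by rw [smul_eq_C_mul, mul_one],
          map_smul, map_one]
      rw [this, sub_self]
    have hmemzero : ∀ z ∈ I, α z = 0 := by
      intro z hz
      have := hz 1
      rwa [mul_one] at this
    have hα : ∀ (c : k) (p : MvPolynomial (Fin 2) k), p - C c ∈ I → α p = c * α 1 := by
      intro c p hp
      have h1 : α (p - C c) = 0 := hmemzero _ hp
      have h2 : α (C c) = c * α 1 := by
        rw [show (C c : MvPolynomial (Fin 2) k) = c • 1 by rw [smul_eq_C_mul, mul_one],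
          map_smul, smul_eq_mul]
      have := map_sub α p (C c)
      rw [h1] at this
      rw [eq_of_sub_eq_zero this.symm, h2]
    have hlam : α 1 ≠ 0 := by
      intro h0
      apply hone
      rw [← map_one (Ideal.Quotient.mk I), Ideal.Quotient.eq_zero_iff_mem]
      intro f
      obtain ⟨c, hc⟩ := hconst f
      rw [one_mul, hα c f hc, h0, mul_zero]
    obtain ⟨c1, hc1⟩ := hconst (X 0)
    obtain ⟨c2, hc2⟩ := hconst (X 1)
    refine ⟨α 1, c1, c2, hlam, fun l g => ?_⟩
    have hmk1 : Ideal.Quotient.mk I (X 0) = Ideal.Quotient.mk I (C c1) := by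
      rw [Ideal.Quotient.eq]; exact hc1
    have hmk2 : Ideal.Quotient.mk I (X 1) = Ideal.Quotient.mk I (C c2) := by
      rw [Ideal.Quotient.eq]; exact hc2
    have hmem : (X 0 : MvPolynomial (Fin 2) k) ^ l * (X 1) ^ g - C (c1 ^ l * c2 ^ g) ∈ I := by
      rw [← Ideal.Quotient.eq]
      simp only [C_mul, C_pow, map_mul, map_pow, hmk1, hmk2]
    rw [hα _ _ hmem]
    ring
  · rintro ⟨lam, l1, l2, hlam, h⟩
    set v : Fin 2 → k := ![l1, l2] with hv
    have hmono : ∀ (s : Fin 2 →₀ ℕ) (c : k),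
        α (monomial s c) = lam * aeval v (monomial s c) := by
      intro s c
      have e : (monomial s c : MvPolynomial (Fin 2) k)
          = c • ((X 0 : MvPolynomial (Fin 2) k) ^ (s 0) * (X 1) ^ (s 1)) := by
        rw [pow_mul_eq_monomial, smul_monomial, smul_eq_mul, mul_one]
      rw [e, map_smul, map_smul, h, smul_eq_mul, smul_eq_mul, map_mul, map_pow, map_pow,
        aeval_X, aeval_X]
      simp only [hv, Matrix.cons_val_zero, Matrix.cons_val_one, Matrix.head_cons]
      ring
    have hkey : ∀ p : MvPolynomial (Fin 2) k, α p = lam * aeval v p := by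
      intro p
      conv_lhs => rw [p.as_sum]
      conv_rhs => rw [p.as_sum]
      rw [map_sum, map_sum, Finset.mul_sum]
      exact Finset.sum_congr rfl fun m _ => hmono m _
    have hker : I = RingHom.ker (aeval (R := k) v : MvPolynomial (Fin 2) k →ₐ[k] k) := by
      ext z
      constructor
      · intro hz
        have := hz 1
        rw [mul_one, hkey] at this
        rw [RingHom.mem_ker]
        exact (mul_eq_zero.mp this).resolve_left hlam
      · intro hz f
        rw [hkey, map_mul, RingHom.mem_ker.mp hz, zero_mul, mul_zero]
    have hsurj : Function.Surjective (aeval (R := k) v : MvPolynomial (Fin 2) k →ₐ[k] k) :=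
      fun c => ⟨C c, aeval_C _ c⟩
    have e := Ideal.quotientKerAlgEquivOfSurjective hsurj
    rw [hker]
    rw [e.toLinearEquiv.finrank_eq]
    exact Module.finrank_self k
end

section
/- Let α : ℂ[T1,T2] → ℂ be a recognizable linear functional whose syntactic ideal I_α has codimension m (i.e., dim_ℂ ℂ[T1,T2]/I_α = m). Then for every integer n ≥ m there exists an ideal I of ℂ[T1,T2] with I ⊆ I_α and dim_ℂ ℂ[T1,T2]/I = n. (This is the algebraic content of the surjectivity of the map from the dual tautological bundle of the Hilbert scheme of n points, p ↦ α_p, onto the set of recognizable series of codimension at most n.) -/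
open MvPolynomial

set_option maxHeartbeats 1000000 in
/-- Shrinking an ideal of finite codimension, increasing the codimension by exactly one. -/
lemma exists_step (J : Ideal (MvPolynomial (Fin 2) ℂ))
    [FiniteDimensional ℂ (MvPolynomial (Fin 2) ℂ ⧸ J)] :
    ∃ K : Ideal (MvPolynomial (Fin 2) ℂ), K ≤ J ∧
      FiniteDimensional ℂ (MvPolynomial (Fin 2) ℂ ⧸ K) ∧
      Module.finrank ℂ (MvPolynomial (Fin 2) ℂ ⧸ K)
        = Module.finrank ℂ (MvPolynomial (Fin 2) ℂ ⧸ J) + 1 := by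
  classical
  set R := MvPolynomial (Fin 2) ℂ
  set u : R ⧸ J := Ideal.Quotient.mk J (X 0) with hu_def
  have hu : IsIntegral ℂ u := IsIntegral.of_finite ℂ u
  set p := minpoly ℂ u with hp
  have hpne : p ≠ 0 := minpoly.ne_zero hu
  -- pick `a : ℂ` which is not a root of `p`
  obtain ⟨a, ha⟩ := Infinite.exists_notMem_finset p.roots.toFinset
  have heval : p.eval a ≠ 0 := by
    intro h
    exact ha (by simp [Polynomial.mem_roots, hpne, h])
  -- `u - a` is a unit in `R ⧸ J`
  have hkey : (u - algebraMap ℂ (R ⧸ J) a) *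
      (Polynomial.aeval u (p /ₘ (Polynomial.X - Polynomial.C a)))
      = - algebraMap ℂ (R ⧸ J) (p.eval a) := by
    have h1 : p %ₘ (Polynomial.X - Polynomial.C a) +
        (Polynomial.X - Polynomial.C a) * (p /ₘ (Polynomial.X - Polynomial.C a)) = p :=
      Polynomial.modByMonic_add_div p (Polynomial.X - Polynomial.C a)
    have h2 := congrArg (Polynomial.aeval u) h1
    rw [Polynomial.modByMonic_X_sub_C_eq_C_eval] at h2
    simp only [map_add, map_mul, map_sub, Polynomial.aeval_X, Polynomial.aeval_C] at h2
    have h3 : Polynomial.aeval u p = 0 := by rw [hp]; exact minpoly.aeval ℂ u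
    linear_combination h2 + h3
  have hunit : IsUnit (u - algebraMap ℂ (R ⧸ J) a) := by
    refine IsUnit.of_mul_eq_one
      (Polynomial.aeval u (p /ₘ (Polynomial.X - Polynomial.C a)) *
        algebraMap ℂ (R ⧸ J) (- p.eval a)⁻¹) ?_
    have hneg : -(algebraMap ℂ (R ⧸ J)) (p.eval a) = algebraMap ℂ (R ⧸ J) (- p.eval a) :=
      (map_neg (algebraMap ℂ (R ⧸ J)) (p.eval a)).symm
    rw [← mul_assoc, hkey, hneg, ← map_mul,
      mul_inv_cancel₀ (by simpa using heval), map_one]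
  -- the maximal ideal of the point `(a, 0)`
  set ev : R →ₐ[ℂ] ℂ := aeval (fun i => if i = 0 then a else 0) with hev
  set M : Ideal R := RingHom.ker ev with hM
  have hevsurj : Function.Surjective ev := fun c => ⟨MvPolynomial.C c, by rw [hev, MvPolynomial.aeval_C]; exact Algebra.algebraMap_self_apply c⟩
  -- `J` and `M` are coprime
  have hcop : IsCoprime J M := by
    rw [Ideal.isCoprime_iff_sup_eq, Ideal.eq_top_iff_one]
    obtain ⟨v, hv⟩ := hunit
    obtain ⟨w, hw⟩ := Ideal.Quotient.mk_surjective ((v⁻¹ : (R ⧸ J)ˣ) : R ⧸ J)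
    have hmk : (Ideal.Quotient.mk J) ((X 0 - MvPolynomial.C a) * w) = 1 := by
      rw [map_mul, map_sub, hw]
      have h1 : Ideal.Quotient.mk J (MvPolynomial.C a) = algebraMap ℂ (R ⧸ J) a := rfl
      rw [h1, ← hu_def, ← hv]
      exact v.mul_inv
    have hmem : (1 : R) - (X 0 - MvPolynomial.C a) * w ∈ J := by
      rw [← Ideal.Quotient.eq_zero_iff_mem, map_sub, hmk, map_one, sub_self]
    have hmem2 : (X 0 - MvPolynomial.C a) * w ∈ M := by
      have hx : ev (X 0 - MvPolynomial.C a) = 0 := by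
        rw [hev, map_sub, MvPolynomial.aeval_X, MvPolynomial.aeval_C]
        simp
      rw [hM, RingHom.mem_ker, map_mul, hx, zero_mul]
    have h1 : (1 : R) = ((1 : R) - (X 0 - MvPolynomial.C a) * w)
        + (X 0 - MvPolynomial.C a) * w := by ring
    rw [h1]
    exact Ideal.add_mem _ (Ideal.mem_sup_left hmem) (Ideal.mem_sup_right hmem2)
  -- Chinese remainder theorem, as an algebra equivalence
  let e : (R ⧸ (J ⊓ M)) ≃+* (R ⧸ J) × (R ⧸ M) := Ideal.quotientInfEquivQuotientProd J M hcop
  let e' : (R ⧸ (J ⊓ M)) ≃ₐ[ℂ] (R ⧸ J) × (R ⧸ M) := by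
    refine AlgEquiv.ofRingEquiv (f := e) ?_
    intro c
    have h0 : (algebraMap ℂ (R ⧸ (J ⊓ M))) c = Ideal.Quotient.mk _ (algebraMap ℂ R c) := rfl
    rw [h0]
    apply Prod.ext
    · simp only [e, Ideal.quotientInfEquivQuotientProd_fst, Ideal.Quotient.factor_mk]
      rfl
    · simp only [e, Ideal.quotientInfEquivQuotientProd_snd, Ideal.Quotient.factor_mk]
      rfl
  -- `R ⧸ M` is one-dimensional
  let e2 : (R ⧸ M) ≃ₐ[ℂ] ℂ := Ideal.quotientKerAlgEquivOfSurjective hevsurj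
  have fdM : FiniteDimensional ℂ (R ⧸ M) := e2.symm.toLinearEquiv.finiteDimensional
  have fdK : FiniteDimensional ℂ (R ⧸ (J ⊓ M)) := e'.symm.toLinearEquiv.finiteDimensional
  refine ⟨J ⊓ M, inf_le_left, fdK, ?_⟩
  rw [e'.toLinearEquiv.finrank_eq, Module.finrank_prod, e2.toLinearEquiv.finrank_eq,
    Module.finrank_self]

/-- If `α : ℂ[T₁,T₂] → ℂ` is recognizable with syntactic ideal of codimension `m`, then for
every `n ≥ m` there is an ideal `I ⊆ I_α` of codimension exactly `n`. -/
theorem exists_ideal_of_each_codim (α : MvPolynomial (Fin 2) ℂ →ₗ[ℂ] ℂ)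
    (hrec : Recognizable ℂ α) (m : ℕ)
    (hm : Module.finrank ℂ (MvPolynomial (Fin 2) ℂ ⧸ synIdeal ℂ α) = m) :
    ∀ n : ℕ, m ≤ n →
      ∃ I : Ideal (MvPolynomial (Fin 2) ℂ), I ≤ synIdeal ℂ α ∧
        FiniteDimensional ℂ (MvPolynomial (Fin 2) ℂ ⧸ I) ∧
        Module.finrank ℂ (MvPolynomial (Fin 2) ℂ ⧸ I) = n := by
  -- first: the syntactic ideal has finite codimension
  obtain ⟨I0, hker, hfd⟩ := hrec
  have hle0 : I0 ≤ synIdeal ℂ α := by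
    intro z hz f
    exact hker _ (Ideal.mul_mem_right f I0 hz)
  have hfdsyn : FiniteDimensional ℂ (MvPolynomial (Fin 2) ℂ ⧸ synIdeal ℂ α) := by
    let φ : (MvPolynomial (Fin 2) ℂ ⧸ I0) →ₐ[ℂ] (MvPolynomial (Fin 2) ℂ ⧸ synIdeal ℂ α) :=
      Ideal.Quotient.liftₐ I0 (Ideal.Quotient.mkₐ ℂ (synIdeal ℂ α)) (fun a ha => by
        rw [Ideal.Quotient.mkₐ_eq_mk, Ideal.Quotient.eq_zero_iff_mem]
        exact hle0 ha)
    have hsurj : Function.Surjective φ := by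
      intro y
      obtain ⟨x, rfl⟩ := Ideal.Quotient.mk_surjective y
      exact ⟨Ideal.Quotient.mk I0 x, rfl⟩
    exact Module.Finite.of_surjective φ.toLinearMap hsurj
  intro n hn
  induction n, hn using Nat.le_induction with
  | base => exact ⟨synIdeal ℂ α, le_rfl, hfdsyn, hm⟩
  | succ n hn ih =>
    obtain ⟨I, hI, hfdI, hrk⟩ := ih
    obtain ⟨K, hK, hfdK, hrkK⟩ := @exists_step I hfdI
    exact ⟨K, hK.trans hI, hfdK, by rw [hrkK, hrk]⟩
end

section
/- Let k be a field, n ≥ 1, and α : k[T_1,…,T_n] → k a linear functional on the polynomial ring in n variables, with generating power series Z_α := Σ_{a ∈ ℕ^n} α(T^a) T^a in k[[T_1,…,T_n]]. Then there exists an ideal I of k[T_1,…,T_n] contained in ker α with k[T_1,…,T_n]/I finite-dimensional over k if and only if there exist a polynomial P ∈ k[T_1,…,T_n] and one-variable polynomials Q_1,…,Q_n ∈ k[T] with Q_i(0) ≠ 0 for all i such that Z_α · Q_1(T_1) ⋯ Q_n(T_n) = P holds in k[[T_1,…,T_n]]. -/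
open MvPolynomial Finset

namespace RecogAux

variable {k : Type*} [Field k] {n : ℕ}

lemma coeff_aevalX (Q : Polynomial k) (i : Fin n) (q : Fin n →₀ ℕ) :
    MvPolynomial.coeff q (Polynomial.aeval (X i : MvPolynomial (Fin n) k) Q) =
      if q = Finsupp.single i (q i) then Q.coeff (q i) else 0 := by
  induction Q using Polynomial.induction_on' with
  | add p r hp hr =>
      rw [map_add, coeff_add, hp, hr, Polynomial.coeff_add]
      split <;> simp
  | monomial m a =>
      rw [Polynomial.aeval_monomial, MvPolynomial.algebraMap_eq, X_pow_eq_monomial,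
        C_mul_monomial, mul_one, coeff_monomial]
      by_cases h : Finsupp.single i m = q
      · subst h
        simp [Finsupp.single_eq_same]
      · rw [if_neg h]
        by_cases h1 : q = Finsupp.single i (q i)
        · rw [if_pos h1, Polynomial.coeff_monomial, if_neg fun hm => h (by rw [hm, ← h1])]
        · rw [if_neg h1]

lemma coeff_mul_coe (φ : MvPowerSeries (Fin n) k) (W : MvPolynomial (Fin n) k) (b : Fin n →₀ ℕ) :
    MvPowerSeries.coeff b (φ * (W : MvPowerSeries (Fin n) k)) =
      ∑ q ∈ Finset.Iic b, MvPolynomial.coeff q W * MvPowerSeries.coeff (b - q) φ := by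
  classical
  have hW : (W : MvPowerSeries (Fin n) k) =
      ∑ q ∈ W.support, MvPowerSeries.monomial q (MvPolynomial.coeff q W) := by
    conv_lhs => rw [W.as_sum]
    rw [← MvPolynomial.coeToMvPowerSeries.ringHom_apply, map_sum]
    exact Finset.sum_congr rfl fun q _ => MvPolynomial.coe_monomial q _
  rw [hW, Finset.mul_sum, map_sum]
  have step : ∀ q ∈ W.support,
      MvPowerSeries.coeff b (φ * MvPowerSeries.monomial q (MvPolynomial.coeff q W)) =
        if q ∈ Finset.Iic b then MvPolynomial.coeff q W * MvPowerSeries.coeff (b - q) φ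
        else 0 := by
    intro q _
    rw [MvPowerSeries.coeff_mul_monomial]
    by_cases h : q ≤ b
    · rw [if_pos h, if_pos (Finset.mem_Iic.2 h), mul_comm]
    · rw [if_neg h, if_neg (fun hc => h (Finset.mem_Iic.1 hc))]
  rw [Finset.sum_congr rfl step, Finset.sum_ite_mem]
  refine Finset.sum_subset Finset.inter_subset_right ?_
  intro q hq hq2
  have : MvPolynomial.coeff q W = 0 := by
    by_contra hc
    exact hq2 (Finset.mem_inter.2 ⟨MvPolynomial.mem_support_iff.2 hc, hq⟩)
  rw [this, zero_mul]

lemma coeff_mul_aevalX (φ : MvPowerSeries (Fin n) k) (Q : Polynomial k) (i : Fin n)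
    (b : Fin n →₀ ℕ) :
    MvPowerSeries.coeff b (φ * ((Polynomial.aeval (X i : MvPolynomial (Fin n) k) Q : MvPolynomial (Fin n) k) : MvPowerSeries (Fin n) k)) =
      ∑ j ∈ Finset.range (b i + 1),
        Q.coeff j * MvPowerSeries.coeff (b - Finsupp.single i j) φ := by
  classical
  rw [coeff_mul_coe]
  have himage : (Finset.range (b i + 1)).image (fun j => Finsupp.single i j) ⊆ Finset.Iic b := by
    intro q hq
    rcases Finset.mem_image.1 hq with ⟨j, hj, rfl⟩
    rw [Finset.mem_range, Nat.lt_succ_iff] at hj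
    exact Finset.mem_Iic.2 (Finsupp.single_le_iff.2 hj)
  rw [← Finset.sum_subset himage ?van]
  · have hinj : ∀ x ∈ Finset.range (b i + 1), ∀ y ∈ Finset.range (b i + 1),
        (fun j => Finsupp.single i j) x = (fun j => Finsupp.single i j) y → x = y :=
      fun x _ y _ h => Finsupp.single_injective i h
    rw [Finset.sum_image hinj]
    refine Finset.sum_congr rfl fun j hj => ?_
    rw [coeff_aevalX]
    simp [Finsupp.single_eq_same]
  case van =>
    intro q hq hq'
    rw [coeff_aevalX]
    rw [if_neg, zero_mul]
    intro hcontra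
    apply hq'
    refine Finset.mem_image.2 ⟨q i, ?_, hcontra.symm⟩
    rw [Finset.mem_range, Nat.lt_succ_iff]
    exact (Finsupp.le_def.1 (Finset.mem_Iic.1 hq)) i

/-- Finsupp arithmetic helper. -/
lemma finsupp_sub_single (a : Fin n →₀ ℕ) (i : Fin n) (m d l : ℕ) (hl : l ≤ d) :
    a + Finsupp.single i (m + d) - Finsupp.single i (d - l) = a + Finsupp.single i (m + l) := by
  ext x
  by_cases hx : x = i
  · subst hx
    simp only [Finsupp.tsub_apply, Finsupp.add_apply, Finsupp.single_eq_same]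
    omega
  · have hix : i ≠ x := fun h => hx h.symm
    simp [Finsupp.tsub_apply, Finsupp.add_apply, Finsupp.single_apply, hix]

lemma sum_shift (φ : MvPowerSeries (Fin n) k) (Q f : Polynomial k) (d : ℕ)
    (hQf : ∀ j ≤ d, Q.coeff j = f.coeff (d - j)) (hQtop : ∀ j, d < j → Q.coeff j = 0)
    (i : Fin n) (a : Fin n →₀ ℕ) (m : ℕ) :
    MvPowerSeries.coeff (a + Finsupp.single i (m + d))
        (φ * ((Polynomial.aeval (X i : MvPolynomial (Fin n) k) Q : MvPolynomial (Fin n) k) : MvPowerSeries (Fin n) k)) =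
      ∑ l ∈ Finset.range (d + 1),
        f.coeff l * MvPowerSeries.coeff (a + Finsupp.single i (m + l)) φ := by
  classical
  set b := a + Finsupp.single i (m + d) with hb
  have hbi : b i = a i + (m + d) := by simp [hb, Finsupp.single_eq_same]
  rw [coeff_mul_aevalX]
  rw [← Finset.sum_subset (Finset.range_subset_range.2 (by omega) :
      Finset.range (d + 1) ⊆ Finset.range (b i + 1)) ?van]
  · rw [← Finset.sum_range_reflect]
    refine Finset.sum_congr rfl fun j hj => ?_
    rw [Finset.mem_range, Nat.lt_succ_iff] at hj
    have h1 : d + 1 - 1 - j = d - j := by omega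
    rw [h1, hQf (d - j) (by omega)]
    have h2 : d - (d - j) = j := by omega
    rw [h2, finsupp_sub_single a i m d j hj]
  case van =>
    intro j hj hj'
    rw [Finset.mem_range] at hj hj'
    rw [hQtop j (by omega), zero_mul]

/-- Multiplying by a polynomial in a different variable preserves the recurrence. -/
lemma rec_mul (φ : MvPowerSeries (Fin n) k) (f : Polynomial k) (d : ℕ) (i j : Fin n)
    (hij : j ≠ i) (R : Polynomial k)
    (hrec : ∀ a : Fin n →₀ ℕ,
      ∑ l ∈ Finset.range (d + 1),
        f.coeff l * MvPowerSeries.coeff (a + Finsupp.single i l) φ = 0) :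
    ∀ a : Fin n →₀ ℕ,
      ∑ l ∈ Finset.range (d + 1),
        f.coeff l * MvPowerSeries.coeff (a + Finsupp.single i l)
          (φ * ((Polynomial.aeval (X j : MvPolynomial (Fin n) k) R : MvPolynomial (Fin n) k) : MvPowerSeries (Fin n) k)) = 0 := by
  intro a
  have haj : ∀ l : ℕ, (a + Finsupp.single i l) j = a j := by
    intro l
    simp [Finsupp.add_apply, Finsupp.single_apply, if_neg (fun h : i = j => hij h.symm)]
  have key : ∀ l : ℕ, ∀ s ≤ a j,
      a + Finsupp.single i l - Finsupp.single j s = (a - Finsupp.single j s) + Finsupp.single i l := by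
    intro l s hs
    ext x
    by_cases hx : x = i
    · subst hx
      simp only [Finsupp.tsub_apply, Finsupp.add_apply, Finsupp.single_eq_same,
        Finsupp.single_apply, if_neg (fun h : j = x => hij h)]
      omega
    · by_cases hxj : x = j
      · subst hxj
        simp only [Finsupp.tsub_apply, Finsupp.add_apply, Finsupp.single_eq_same,
          Finsupp.single_apply, if_neg (fun h : i = x => hx h.symm)]
        omega
      · have h1 : i ≠ x := fun h => hx h.symm
        have h2 : j ≠ x := fun h => hxj h.symm
        simp [Finsupp.tsub_apply, Finsupp.add_apply, Finsupp.single_apply, h1, h2]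
  calc ∑ l ∈ Finset.range (d + 1),
        f.coeff l * MvPowerSeries.coeff (a + Finsupp.single i l)
          (φ * ((Polynomial.aeval (X j : MvPolynomial (Fin n) k) R : MvPolynomial (Fin n) k) : MvPowerSeries (Fin n) k))
      = ∑ l ∈ Finset.range (d + 1), ∑ s ∈ Finset.range (a j + 1),
          R.coeff s * (f.coeff l *
            MvPowerSeries.coeff ((a - Finsupp.single j s) + Finsupp.single i l) φ) := by
        refine Finset.sum_congr rfl fun l _ => ?_
        rw [coeff_mul_aevalX, haj l, Finset.mul_sum]
        refine Finset.sum_congr rfl fun s hs => ?_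
        rw [Finset.mem_range, Nat.lt_succ_iff] at hs
        rw [key l s hs]
        ring
    _ = ∑ s ∈ Finset.range (a j + 1), R.coeff s *
          ∑ l ∈ Finset.range (d + 1),
            f.coeff l * MvPowerSeries.coeff ((a - Finsupp.single j s) + Finsupp.single i l) φ := by
        rw [Finset.sum_comm]
        exact Finset.sum_congr rfl fun s _ => by rw [Finset.mul_sum]
    _ = 0 := by
        refine Finset.sum_eq_zero fun s _ => ?_
        rw [hrec, mul_zero]

lemma monomial_mul_aeval (f : Polynomial k) (i : Fin n) (a : Fin n →₀ ℕ) (e : ℕ)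
    (he : f.natDegree ≤ e) :
    (monomial a 1 : MvPolynomial (Fin n) k) * Polynomial.aeval (X i : MvPolynomial (Fin n) k) f =
      ∑ l ∈ Finset.range (e + 1), monomial (a + Finsupp.single i l) (f.coeff l) := by
  conv_lhs => rw [Polynomial.as_sum_range' f (e + 1) (Nat.lt_succ_of_le he)]
  rw [map_sum, Finset.mul_sum]
  refine Finset.sum_congr rfl fun l _ => ?_
  rw [Polynomial.aeval_monomial, MvPolynomial.algebraMap_eq, X_pow_eq_monomial,
    C_mul_monomial, monomial_mul]
  simp

/-- Applying α to `T^a * f(X_i)` gives the recurrence sum. -/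
lemma alpha_monomial_mul (α : MvPolynomial (Fin n) k →ₗ[k] k) (Z : MvPowerSeries (Fin n) k)
    (hZ : ∀ d : Fin n →₀ ℕ, MvPowerSeries.coeff d Z = α (monomial d 1))
    (f : Polynomial k) (i : Fin n) (a : Fin n →₀ ℕ) (e : ℕ) (he : f.natDegree ≤ e) :
    α ((monomial a 1 : MvPolynomial (Fin n) k) *
        Polynomial.aeval (X i : MvPolynomial (Fin n) k) f) =
      ∑ l ∈ Finset.range (e + 1),
        f.coeff l * MvPowerSeries.coeff (a + Finsupp.single i l) Z := by
  rw [monomial_mul_aeval f i a e he, map_sum]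
  refine Finset.sum_congr rfl fun l _ => ?_
  have : (monomial (a + Finsupp.single i l) (f.coeff l) : MvPolynomial (Fin n) k) =
      f.coeff l • monomial (a + Finsupp.single i l) 1 := by
    rw [smul_monomial, smul_eq_mul, mul_one]
  rw [this, map_smul, smul_eq_mul, hZ]

lemma constantCoeff_aevalX (Q : Polynomial k) (i : Fin n) :
    constantCoeff (Polynomial.aeval (X i : MvPolynomial (Fin n) k) Q) = Q.eval 0 := by
  induction Q using Polynomial.induction_on' with
  | add p r hp hr => rw [map_add, map_add, hp, hr, Polynomial.eval_add]
  | monomial m a =>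
      rw [Polynomial.aeval_monomial, MvPolynomial.algebraMap_eq, map_mul, map_pow,
        constantCoeff_C, constantCoeff_X, Polynomial.eval_monomial]

lemma coeff_prod_support (Q : Fin n → Polynomial k) (s : Finset (Fin n)) :
    ∀ q : Fin n →₀ ℕ, MvPolynomial.coeff q
        (∏ j ∈ s, Polynomial.aeval (X j : MvPolynomial (Fin n) k) (Q j)) ≠ 0 →
    ∀ x : Fin n, q x ≠ 0 → x ∈ s := by
  classical
  induction s using Finset.induction_on with
  | empty =>
      intro q hq
      rw [Finset.prod_empty, MvPolynomial.coeff_one] at hq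
      intro x hx
      exfalso
      by_cases h : (0 : Fin n →₀ ℕ) = q
      · exact hx (by rw [← h]; rfl)
      · exact hq (if_neg h)
  | insert a s' ha IH =>
      intro q hq
      rw [Finset.prod_insert ha, MvPolynomial.coeff_mul] at hq
      obtain ⟨p, hp, hne⟩ := Finset.exists_ne_zero_of_sum_ne_zero hq
      rw [HasAntidiagonal.mem_antidiagonal] at hp
      have h1 := left_ne_zero_of_mul hne
      have h2 := right_ne_zero_of_mul hne
      rw [coeff_aevalX] at h1
      have hps : p.1 = Finsupp.single a (p.1 a) := by
        by_contra hcon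
        exact h1 (if_neg hcon)
      intro x hx
      have : p.1 x ≠ 0 ∨ p.2 x ≠ 0 := by
        by_contra hcon
        push_neg at hcon
        apply hx
        rw [← hp, Finsupp.add_apply, hcon.1, hcon.2]
      rcases this with h | h
      · have hxa : x = a := by
          by_contra hxa
          apply h
          rw [hps, Finsupp.single_apply, if_neg (fun hh : a = x => hxa hh.symm)]
        exact hxa ▸ Finset.mem_insert_self a s'
      · exact Finset.mem_insert_of_mem (IH p.2 h2 x h)

lemma coeff_zero_prod (Q : Fin n → Polynomial k) (s : Finset (Fin n)) :
    MvPolynomial.coeff 0 (∏ j ∈ s, Polynomial.aeval (X j : MvPolynomial (Fin n) k) (Q j)) =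
      ∏ j ∈ s, (Q j).eval 0 := by
  have : MvPolynomial.coeff (0 : Fin n →₀ ℕ)
      (∏ j ∈ s, Polynomial.aeval (X j : MvPolynomial (Fin n) k) (Q j)) =
      constantCoeff (∏ j ∈ s, Polynomial.aeval (X j : MvPolynomial (Fin n) k) (Q j)) := rfl
  rw [this, map_prod]
  exact Finset.prod_congr rfl fun j _ => constantCoeff_aevalX (Q j) j

/-- Backward vanishing: if `Y * V = P` with `V` a polynomial not involving `Xᵢ` and with
nonzero constant coefficient, then coefficients of `Y` vanish once the `i`-exponent exceeds
the total degree of `P`. -/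
lemma vanish_backward (Y : MvPowerSeries (Fin n) k) (V P : MvPolynomial (Fin n) k) (i : Fin n)
    (hV0 : MvPolynomial.coeff 0 V ≠ 0)
    (hVsupp : ∀ q : Fin n →₀ ℕ, MvPolynomial.coeff q V ≠ 0 → q i = 0)
    (hYV : Y * (V : MvPowerSeries (Fin n) k) = (P : MvPowerSeries (Fin n) k)) :
    ∀ b : Fin n →₀ ℕ, P.totalDegree < b i → MvPowerSeries.coeff b Y = 0 := by
  classical
  suffices H : ∀ w : ℕ, ∀ b : Fin n →₀ ℕ, (∑ j ∈ Finset.univ.erase i, b j) = w →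
      P.totalDegree < b i → MvPowerSeries.coeff b Y = 0 by
    intro b hb
    exact H _ b rfl hb
  intro w
  induction w using Nat.strong_induction_on with
  | _ w IH =>
    intro b hw hbi
    have hPb : MvPolynomial.coeff b P = 0 := by
      apply coeff_eq_zero_of_totalDegree_lt
      have hbi0 : b i ≠ 0 := by omega
      have hmem : i ∈ b.support := Finsupp.mem_support_iff.2 hbi0
      calc P.totalDegree < b i := hbi
        _ ≤ ∑ j ∈ b.support, b j := Finset.single_le_sum (fun j _ => Nat.zero_le _) hmem
    have hcoe : MvPowerSeries.coeff b (Y * (V : MvPowerSeries (Fin n) k)) = MvPolynomial.coeff b P := by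
      rw [hYV, MvPolynomial.coeff_coe]
    rw [coeff_mul_coe] at hcoe
    have hzero : (0 : Fin n →₀ ℕ) ∈ Finset.Iic b := Finset.mem_Iic.2 (zero_le (a := b))
    rw [← Finset.add_sum_erase _ _ hzero] at hcoe
    have hrest : ∑ q ∈ (Finset.Iic b).erase 0,
        MvPolynomial.coeff q V * MvPowerSeries.coeff (b - q) Y = 0 := by
      refine Finset.sum_eq_zero fun q hq => ?_
      rcases Finset.mem_erase.1 hq with ⟨hq0, hqb⟩
      by_cases hVq : MvPolynomial.coeff q V = 0
      · rw [hVq, zero_mul]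
      · have hqi : q i = 0 := hVsupp q hVq
        have hqle : q ≤ b := Finset.mem_Iic.1 hqb
        -- find j ≠ i with q j ≠ 0
        obtain ⟨j, hj⟩ : ∃ j, q j ≠ 0 := by
          by_contra hcon
          push_neg at hcon
          exact hq0 (Finsupp.ext hcon)
        have hji : j ≠ i := fun h => hj (h ▸ hqi)
        have hwlt : (∑ x ∈ Finset.univ.erase i, (b - q) x) < w := by
          rw [← hw]
          refine Finset.sum_lt_sum (fun x _ => ?_) ⟨j, Finset.mem_erase.2 ⟨hji, Finset.mem_univ j⟩, ?_⟩
          · rw [Finsupp.tsub_apply]; omega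
          · rw [Finsupp.tsub_apply]
            have := Finsupp.le_def.1 hqle j
            omega
        have hbqi : P.totalDegree < (b - q) i := by
          rw [Finsupp.tsub_apply, hqi]
          omega
        rw [IH _ hwlt (b - q) rfl hbqi, mul_zero]
    rw [hrest, add_zero, tsub_zero, hPb] at hcoe
    exact (mul_eq_zero.1 hcoe).resolve_left hV0

end RecogAux

open RecogAux

/-- A linear functional `α` on `k[T₁,…,Tₙ]` (for `n ≥ 1`) admits an ideal of finite
codimension inside its kernel iff its generating power series `Z_α` equals
`P / (Q₁(T₁)⋯Qₙ(Tₙ))` for some polynomial `P` and one-variable polynomials `Qᵢ` with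
`Qᵢ(0) ≠ 0`. -/
theorem recognizable_iff_rational_multivariable (k : Type*) [Field k] (n : ℕ) (hn : 1 ≤ n)
    (α : MvPolynomial (Fin n) k →ₗ[k] k)
    (Z : MvPowerSeries (Fin n) k)
    (hZ : ∀ d : Fin n →₀ ℕ, MvPowerSeries.coeff d Z = α (monomial d 1)) :
    (∃ I : Ideal (MvPolynomial (Fin n) k),
        (∀ x ∈ I, α x = 0) ∧ FiniteDimensional k (MvPolynomial (Fin n) k ⧸ I)) ↔
      ∃ (P : MvPolynomial (Fin n) k) (Q : Fin n → Polynomial k),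
        (∀ i, (Q i).eval 0 ≠ 0) ∧
        Z * ∏ i : Fin n,
            ((Polynomial.aeval (X i : MvPolynomial (Fin n) k) (Q i) :
                MvPolynomial (Fin n) k) : MvPowerSeries (Fin n) k)
          = (P : MvPowerSeries (Fin n) k) := by
  classical
  constructor
  · -- Forward: finite codimension ⟹ rational
    rintro ⟨I, hαI, hfin⟩
    have hint : ∀ i : Fin n, ∃ f : Polynomial k, f.Monic ∧
        Polynomial.aeval (X i : MvPolynomial (Fin n) k) f ∈ I := by
      intro i
      obtain ⟨f, hf1, hf2⟩ := IsIntegral.of_finite k (Ideal.Quotient.mk I (X i))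
      refine ⟨f, hf1, ?_⟩
      have h0 : Ideal.Quotient.mkₐ k I (Polynomial.aeval (X i) f) = 0 := by
        rw [← Polynomial.aeval_algHom_apply, Ideal.Quotient.mkₐ_eq_mk, Polynomial.aeval_def]
        exact hf2
      rwa [Ideal.Quotient.mkₐ_eq_mk, Ideal.Quotient.eq_zero_iff_mem] at h0
    choose f hfmonic hfI using hint
    set d : Fin n → ℕ := fun i => (f i).natDegree with hd
    set Q : Fin n → Polynomial k := fun i => (f i).reverse with hQdef
    have hQ0 : ∀ i, (Q i).eval 0 ≠ 0 := by
      intro i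
      rw [← Polynomial.coeff_zero_eq_eval_zero, hQdef, Polynomial.coeff_zero_reverse,
        (hfmonic i).leadingCoeff]
      exact one_ne_zero
    have hQf : ∀ i, ∀ j ≤ d i, (Q i).coeff j = (f i).coeff (d i - j) := by
      intro i j hj
      rw [hQdef, Polynomial.coeff_reverse, Polynomial.revAt_le hj]
    have hQtop : ∀ i, ∀ j, d i < j → (Q i).coeff j = 0 := by
      intro i j hj
      exact Polynomial.coeff_eq_zero_of_natDegree_lt
        (lt_of_le_of_lt ((f i).reverse_natDegree_le) hj)
    have hrecZ : ∀ i : Fin n, ∀ a : Fin n →₀ ℕ,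
        ∑ l ∈ Finset.range (d i + 1),
          (f i).coeff l * MvPowerSeries.coeff (a + Finsupp.single i l) Z = 0 := by
      intro i a
      rw [← alpha_monomial_mul α Z hZ (f i) i a (d i) le_rfl]
      exact hαI _ (Ideal.mul_mem_left I _ (hfI i))
    have hvanish : ∀ b : Fin n →₀ ℕ, (∃ i : Fin n, d i ≤ b i) →
        MvPowerSeries.coeff b (Z * ∏ i : Fin n,
          ((Polynomial.aeval (X i : MvPolynomial (Fin n) k) (Q i) :
            MvPolynomial (Fin n) k) : MvPowerSeries (Fin n) k)) = 0 := by
      rintro b ⟨i, hi⟩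
      have hsplit : (∏ j : Fin n, ((Polynomial.aeval (X j : MvPolynomial (Fin n) k) (Q j) :
            MvPolynomial (Fin n) k) : MvPowerSeries (Fin n) k))
          = (∏ j ∈ Finset.univ.erase i, ((Polynomial.aeval (X j : MvPolynomial (Fin n) k) (Q j) :
              MvPolynomial (Fin n) k) : MvPowerSeries (Fin n) k)) *
            ((Polynomial.aeval (X i : MvPolynomial (Fin n) k) (Q i) :
              MvPolynomial (Fin n) k) : MvPowerSeries (Fin n) k) :=
        (Finset.prod_erase_mul _ _ (Finset.mem_univ i)).symm
      rw [hsplit, ← mul_assoc]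
      have hrecprod : ∀ s : Finset (Fin n), i ∉ s → ∀ a : Fin n →₀ ℕ,
          ∑ l ∈ Finset.range (d i + 1), (f i).coeff l *
            MvPowerSeries.coeff (a + Finsupp.single i l)
              (Z * ∏ j ∈ s, ((Polynomial.aeval (X j : MvPolynomial (Fin n) k) (Q j) :
                MvPolynomial (Fin n) k) : MvPowerSeries (Fin n) k)) = 0 := by
        intro s
        induction s using Finset.induction_on with
        | empty => intro _ a; simpa using hrecZ i a
        | insert c s' ha IH =>
            intro hcs a
            have hci : c ≠ i := fun h => hcs (h ▸ Finset.mem_insert_self c s')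
            have his' : i ∉ s' := fun h => hcs (Finset.mem_insert_of_mem h)
            rw [Finset.prod_insert ha]
            have : Z * (((Polynomial.aeval (X c : MvPolynomial (Fin n) k) (Q c) :
                  MvPolynomial (Fin n) k) : MvPowerSeries (Fin n) k) *
                ∏ j ∈ s', ((Polynomial.aeval (X j : MvPolynomial (Fin n) k) (Q j) :
                  MvPolynomial (Fin n) k) : MvPowerSeries (Fin n) k))
                = (Z * ∏ j ∈ s', ((Polynomial.aeval (X j : MvPolynomial (Fin n) k) (Q j) :
                  MvPolynomial (Fin n) k) : MvPowerSeries (Fin n) k)) *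
                  ((Polynomial.aeval (X c : MvPolynomial (Fin n) k) (Q c) :
                  MvPolynomial (Fin n) k) : MvPowerSeries (Fin n) k) := by ring
            rw [this]
            exact rec_mul _ (f i) (d i) i c hci (Q c) (IH his') a
      have hrecY := hrecprod (Finset.univ.erase i) (Finset.notMem_erase i _)
      have hb : b = (b - Finsupp.single i (d i)) + Finsupp.single i (0 + (d i)) := by
        ext x
        by_cases hx : x = i
        · subst hx
          simp only [Finsupp.add_apply, Finsupp.tsub_apply, Finsupp.single_eq_same, zero_add]
          omega
        · have hix : i ≠ x := fun h => hx h.symm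
          simp [Finsupp.add_apply, Finsupp.tsub_apply, Finsupp.single_apply, hix]
      rw [hb, sum_shift _ (Q i) (f i) (d i) (hQf i) (hQtop i) i _ 0]
      simp only [zero_add]
      exact hrecY _
    set S := Z * ∏ i : Fin n, ((Polynomial.aeval (X i : MvPolynomial (Fin n) k) (Q i) :
        MvPolynomial (Fin n) k) : MvPowerSeries (Fin n) k) with hS
    set D : Fin n →₀ ℕ := Finsupp.equivFunOnFinite.symm (fun i => d i - 1) with hD
    have hDx : ∀ x, D x = d x - 1 := fun x => rfl
    refine ⟨∑ c ∈ Finset.Iic D, monomial c (MvPowerSeries.coeff c S), Q, hQ0, ?_⟩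
    apply MvPowerSeries.ext
    intro b
    rw [MvPolynomial.coeff_coe]
    rw [MvPolynomial.coeff_sum]
    have hterm : ∀ c ∈ Finset.Iic D,
        MvPolynomial.coeff b (monomial c (MvPowerSeries.coeff c S)) =
          if c = b then MvPowerSeries.coeff c S else 0 := by
      intro c _
      rw [coeff_monomial]
    rw [Finset.sum_congr rfl hterm, Finset.sum_ite_eq' (Finset.Iic D) b
      (fun c => MvPowerSeries.coeff c S)]
    by_cases hbD : b ∈ Finset.Iic D
    · rw [if_pos hbD]
    · rw [if_neg hbD]
      apply hvanish
      rw [Finset.mem_Iic, Finsupp.le_def] at hbD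
      push_neg at hbD
      obtain ⟨i, hi⟩ := hbD
      rw [hDx] at hi
      exact ⟨i, by omega⟩
  · -- Backward: rational ⟹ finite codimension
    rintro ⟨P, Q, hQ0, hPQ⟩
    set d : Fin n → ℕ := fun i => (Q i).natDegree with hd
    set f : Fin n → Polynomial k := fun i => (Q i).reverse with hf
    set m : ℕ := P.totalDegree + 1 with hm
    set g : Fin n → MvPolynomial (Fin n) k :=
      fun i => Polynomial.aeval (X i : MvPolynomial (Fin n) k) (Polynomial.X ^ m * f i) with hg
    have hQf : ∀ i, ∀ j ≤ d i, (Q i).coeff j = (f i).coeff (d i - j) := by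
      intro i j hj
      have hdi : d i = (Q i).natDegree := rfl
      have hfi : f i = (Q i).reverse := rfl
      rw [hdi] at hj ⊢
      rw [hfi, Polynomial.coeff_reverse,
        Polynomial.revAt_le (by omega : (Q i).natDegree - j ≤ (Q i).natDegree)]
      congr 1
      omega
    have hQtop : ∀ i, ∀ j, d i < j → (Q i).coeff j = 0 := by
      intro i j hj
      exact Polynomial.coeff_eq_zero_of_natDegree_lt hj
    have hfd : ∀ i, (f i).natDegree ≤ d i := fun i => (Q i).reverse_natDegree_le
    -- vanishing of Z * Q_i beyond degree of P
    have hvan : ∀ i : Fin n, ∀ b : Fin n →₀ ℕ, P.totalDegree < b i →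
        MvPowerSeries.coeff b (Z * ((Polynomial.aeval (X i : MvPolynomial (Fin n) k) (Q i) :
          MvPolynomial (Fin n) k) : MvPowerSeries (Fin n) k)) = 0 := by
      intro i
      set V : MvPolynomial (Fin n) k :=
        ∏ j ∈ Finset.univ.erase i, Polynomial.aeval (X j : MvPolynomial (Fin n) k) (Q j) with hV
      have hVcoe : (V : MvPowerSeries (Fin n) k) =
          ∏ j ∈ Finset.univ.erase i, ((Polynomial.aeval (X j : MvPolynomial (Fin n) k) (Q j) :
            MvPolynomial (Fin n) k) : MvPowerSeries (Fin n) k) := by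
        rw [hV, ← MvPolynomial.coeToMvPowerSeries.ringHom_apply, map_prod]
        rfl
      have hYV : (Z * ((Polynomial.aeval (X i : MvPolynomial (Fin n) k) (Q i) :
            MvPolynomial (Fin n) k) : MvPowerSeries (Fin n) k)) * (V : MvPowerSeries (Fin n) k)
          = (P : MvPowerSeries (Fin n) k) := by
        rw [hVcoe, ← hPQ, mul_assoc]
        congr 1
        exact Finset.mul_prod_erase Finset.univ
          (fun j => ((Polynomial.aeval (X j : MvPolynomial (Fin n) k) (Q j) :
            MvPolynomial (Fin n) k) : MvPowerSeries (Fin n) k)) (Finset.mem_univ i)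
      have hV0 : MvPolynomial.coeff 0 V ≠ 0 := by
        rw [hV, coeff_zero_prod]
        exact Finset.prod_ne_zero_iff.2 fun j _ => hQ0 j
      have hVsupp : ∀ q : Fin n →₀ ℕ, MvPolynomial.coeff q V ≠ 0 → q i = 0 := by
        intro q hq
        by_contra hqi
        have := coeff_prod_support Q (Finset.univ.erase i) q hq i hqi
        exact (Finset.notMem_erase i _) this
      exact vanish_backward _ V P i hV0 hVsupp hYV
    -- α kills monomial multiples of the generators
    have hαg : ∀ i : Fin n, ∀ a : Fin n →₀ ℕ,
        α ((monomial a 1 : MvPolynomial (Fin n) k) * g i) = 0 := by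
      intro i a
      have hgsplit : (monomial a 1 : MvPolynomial (Fin n) k) * g i =
          (monomial (a + Finsupp.single i m) 1 : MvPolynomial (Fin n) k) *
            Polynomial.aeval (X i : MvPolynomial (Fin n) k) (f i) := by
        rw [hg]
        simp only
        rw [map_mul, map_pow, Polynomial.aeval_X, X_pow_eq_monomial, ← mul_assoc,
          monomial_mul, mul_one]
      rw [hgsplit, alpha_monomial_mul α Z hZ (f i) i _ (d i) (hfd i)]
      have hsum : ∀ l : ℕ, a + Finsupp.single i m + Finsupp.single i l =
          a + Finsupp.single i (m + l) := by
        intro l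
        rw [add_assoc, ← Finsupp.single_add]
      have := sum_shift Z (Q i) (f i) (d i) (hQf i) (hQtop i) i a m
      rw [Finset.sum_congr rfl (fun l _ => by rw [hsum l])]
      rw [← this]
      apply hvan
      simp only [Finsupp.add_apply, Finsupp.single_eq_same]
      omega
    -- α kills everything in the span
    refine ⟨Ideal.span (Set.range g), ?_, ?_⟩
    · have hαgen : ∀ i : Fin n, ∀ h : MvPolynomial (Fin n) k, α (h * g i) = 0 := by
        intro i h
        conv_lhs => rw [h.as_sum, Finset.sum_mul]
        rw [map_sum]
        refine Finset.sum_eq_zero fun a _ => ?_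
        have hmon : (monomial a (MvPolynomial.coeff a h) : MvPolynomial (Fin n) k) =
            MvPolynomial.coeff a h • (monomial a 1 : MvPolynomial (Fin n) k) := by
          rw [smul_monomial, smul_eq_mul, mul_one]
        rw [hmon, smul_mul_assoc, map_smul, hαg i a, smul_zero]
      intro x hx
      have key : ∀ h : MvPolynomial (Fin n) k, α (h * x) = 0 := by
        refine Submodule.span_induction ?_ ?_ ?_ ?_ hx
        · rintro y ⟨i, rfl⟩ h
          exact hαgen i h
        · intro h
          rw [mul_zero, map_zero]
        · intro y z _ _ hy hz h
          rw [mul_add, map_add, hy h, hz h, add_zero]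
        · intro a y _ hy h
          rw [smul_eq_mul, ← mul_assoc, hy (h * a)]
      have := key 1
      rwa [one_mul] at this
    · -- finite dimensional quotient
      set I : Ideal (MvPolynomial (Fin n) k) := Ideal.span (Set.range g) with hI
      have hx : ∀ i : Fin n, IsIntegral k (Ideal.Quotient.mk I (X i)) := by
        intro i
        have hfne : f i ≠ 0 := by
          intro h
          apply hQ0 i
          have : Q i = 0 := by
            rw [← Polynomial.reverse_eq_zero]
            exact h
          rw [this, Polynomial.eval_zero]
        have hGne : (Polynomial.X ^ m * f i : Polynomial k) ≠ 0 :=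
          mul_ne_zero (pow_ne_zero _ Polynomial.X_ne_zero) hfne
        refine ⟨(Polynomial.X ^ m * f i) * Polynomial.C ((Polynomial.X ^ m * f i).leadingCoeff)⁻¹,
          Polynomial.monic_mul_leadingCoeff_inv hGne, ?_⟩
        rw [← Polynomial.aeval_def, map_mul, Polynomial.aeval_C]
        have haev : Polynomial.aeval (Ideal.Quotient.mk I (X i))
            (Polynomial.X ^ m * f i : Polynomial k) = 0 := by
          rw [← Ideal.Quotient.mkₐ_eq_mk k, Polynomial.aeval_algHom_apply,
            Ideal.Quotient.mkₐ_eq_mk, Ideal.Quotient.eq_zero_iff_mem]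
          exact Ideal.subset_span ⟨i, rfl⟩
        rw [haev, zero_mul]
      have hadj : Algebra.adjoin k (Set.range fun i : Fin n => Ideal.Quotient.mk I (X i)) = ⊤ := by
        have h1 : (Set.range fun i : Fin n => Ideal.Quotient.mk I (X i)) =
            (Ideal.Quotient.mkₐ k I) '' Set.range (X : Fin n → MvPolynomial (Fin n) k) := by
          rw [← Set.range_comp]
          rfl
        rw [h1, ← AlgHom.map_adjoin, adjoin_range_X, Algebra.map_top]
        exact (AlgHom.range_eq_top _).2 (Ideal.Quotient.mkₐ_surjective k I)
      have hfg := fg_adjoin_of_finite (Set.finite_range _)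
        (by rintro x ⟨i, rfl⟩; exact hx i)
      rw [hadj] at hfg
      refine ⟨?_⟩
      rwa [← Algebra.top_toSubmodule]
end
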